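/- arXiv:2406.01890 — 3 statements merged into one kernel-verified Lean document; each statement's English description precedes it below -/
import Mathlib

section
/- For every positive integer s and every odd positive integer t, the deficiencies of H_{s,t}^3 and of H_{s,t}^4 both equal s + 1. -/
open SimpleGraph

/-- The deficiency of a finite graph: number of vertices missed by a maximum matching,
i.e. `|V(G)| - 2ν(G)`. -/
noncomputable def deficiency {V : Type*} [Fintype V] (G : SimpleGraph V) : ℕ :=
  Fintype.card V - sSup {k : ℕ | ∃ M : G.Subgraph, M.IsMatching ∧ M.verts.ncard = k}

/-- The star `K_{1,n}`. -/
def starGraph (n : ℕ) : SimpleGraph (Unit ⊕ Fin n) := completeBipartiteGraph Unit (Fin n)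

/-- `T n`: the graph obtained by attaching two copies of `P₂` at one end of a path `Pₙ`
(the vertices of the path are `Sum.inl 0, …, Sum.inl (n-1)`; the branch vertex is
`Sum.inl (n-1)` and the end of `T n` is `Sum.inl 0`). -/
def Tgraph (n : ℕ) : SimpleGraph (Fin n ⊕ Fin 2) :=
  SimpleGraph.fromRel (fun a b =>
    match a, b with
    | Sum.inl i, Sum.inl j => (i : ℕ) + 1 = (j : ℕ)
    | Sum.inl i, Sum.inr _ => (i : ℕ) = n - 1
    | _, _ => False)

/-- The end vertex of (a copy of) `T p`. -/
def isTEnd {p : ℕ} : Fin p ⊕ Fin 2 → Prop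
  | Sum.inl i => (i : ℕ) = 0
  | Sum.inr _ => False

/-- `K̃ₙᵖ`: the graph obtained by attaching a copy of `T p` at each vertex of the
complete graph `Kₙ`, identifying each vertex of `Kₙ` with the end of its copy of `T p`. -/
def Ktilde (n p : ℕ) : SimpleGraph (Fin n × (Fin p ⊕ Fin 2)) :=
  SimpleGraph.fromRel (fun a b =>
    (a.1 = b.1 ∧ (Tgraph p).Adj a.2 b.2) ∨
    (a.1 ≠ b.1 ∧ isTEnd a.2 ∧ isTEnd b.2))

/-- `Fₙ¹`: the path `P_{2n+1}` with a pendant vertex attached at its center. -/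
def F1 (n : ℕ) : SimpleGraph (Fin (2 * n + 1) ⊕ Unit) :=
  SimpleGraph.fromRel (fun a b =>
    match a, b with
    | Sum.inl i, Sum.inl j => (i : ℕ) + 1 = (j : ℕ)
    | Sum.inl i, Sum.inr _ => (i : ℕ) = n
    | _, _ => False)

/-- `Fₙ²`: the triangle `K₃` with a copy of `Pₙ` attached at each vertex
(the triangle vertices are `(i, 0)`). -/
def F2 (n : ℕ) : SimpleGraph (Fin 3 × Fin n) :=
  SimpleGraph.fromRel (fun a b =>
    (a.1 = b.1 ∧ (a.2 : ℕ) + 1 = (b.2 : ℕ)) ∨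
    (a.1 ≠ b.1 ∧ (a.2 : ℕ) = 0 ∧ (b.2 : ℕ) = 0))

/-- `Fₙ³`: the cycle `C₄` with a copy of `Pₙ` attached at each of two nonadjacent
vertices. The two paths are `(k, 0), …, (k, n-1)` for `k : Fin 2`; the two other cycle
vertices are `Sum.inr 0` and `Sum.inr 1`, each adjacent to `(0,0)` and `(1,0)`. -/
def F3 (n : ℕ) : SimpleGraph ((Fin 2 × Fin n) ⊕ Fin 2) :=
  SimpleGraph.fromRel (fun a b =>
    match a, b with
    | Sum.inl (k, i), Sum.inl (k', i') => k = k' ∧ (i : ℕ) + 1 = (i' : ℕ)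
    | Sum.inl (_, i), Sum.inr _ => (i : ℕ) = 0
    | _, _ => False)

/-- `Fₙ⁴`: `Fₙ³` together with the edge joining its two vertices of degree 3. -/
def F4 (n : ℕ) : SimpleGraph ((Fin 2 × Fin n) ⊕ Fin 2) :=
  SimpleGraph.fromRel (fun a b =>
    match a, b with
    | Sum.inl (k, i), Sum.inl (k', i') =>
        (k = k' ∧ (i : ℕ) + 1 = (i' : ℕ)) ∨ (k ≠ k' ∧ (i : ℕ) = 0 ∧ (i' : ℕ) = 0)
    | Sum.inl (_, i), Sum.inr _ => (i : ℕ) = 0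
    | _, _ => False)

/-- `F̃ₙᵖ`: the triangle `K₃` with a copy of `T p` attached (by its end) at one vertex and
a copy of `Pₙ` attached at each of the other two vertices. -/
def Ftilde (n p : ℕ) : SimpleGraph ((Fin p ⊕ Fin 2) ⊕ (Fin 2 × Fin n)) :=
  SimpleGraph.fromRel (fun a b =>
    match a, b with
    | Sum.inl x, Sum.inl y => (Tgraph p).Adj x y
    | Sum.inl x, Sum.inr (_, i) => isTEnd x ∧ (i : ℕ) = 0
    | Sum.inr (k, i), Sum.inr (k', i') =>
        (k = k' ∧ (i : ℕ) + 1 = (i' : ℕ)) ∨ (k ≠ k' ∧ (i : ℕ) = 0 ∧ (i' : ℕ) = 0)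
    | _, _ => False)

/-- `Bᵢ`: the graph obtained by attaching two copies of `P₂` at the end of `T_{i+2}`. -/
def Bgraph (i : ℕ) : SimpleGraph ((Fin (i + 2) ⊕ Fin 2) ⊕ Fin 2) :=
  SimpleGraph.fromRel (fun a b =>
    match a, b with
    | Sum.inl x, Sum.inl y => (Tgraph (i + 2)).Adj x y
    | Sum.inl x, Sum.inr _ => isTEnd x
    | _, _ => False)

/-- `H¹_{s,t}`: the union of `s+1` disjoint paths `Qᵢ` on `t` vertices (vertices `(i, j)`)
together with new vertices `vᵢ = (i, 0)` and `wᵢ = (i, 1)` (for `i : Fin s`) and the edges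
`vᵢwᵢ`, `vᵢ uᵢᵗ`, `vᵢ u_{i+1}¹`. -/
def H1graph (s t : ℕ) : SimpleGraph ((Fin (s + 1) × Fin t) ⊕ (Fin s × Fin 2)) :=
  SimpleGraph.fromRel (fun a b =>
    match a, b with
    | Sum.inl (i, j), Sum.inl (i', j') => i = i' ∧ (j : ℕ) + 1 = (j' : ℕ)
    | Sum.inl (i, j), Sum.inr (k, l) =>
        (l : ℕ) = 0 ∧ (((i : ℕ) = (k : ℕ) ∧ (j : ℕ) = t - 1) ∨
          ((i : ℕ) = (k : ℕ) + 1 ∧ (j : ℕ) = 0))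
    | Sum.inr (k, l), Sum.inr (k', l') => k = k' ∧ l ≠ l'
    | _, _ => False)

/-- `H³_{s,t}`: the union of `s+1` disjoint paths `Qᵢ` on `t` vertices together with new
vertices `vᵢ, wᵢ` (`i : Fin s`), `x = Sum.inr (Sum.inr 0)`, `y = Sum.inr (Sum.inr 1)`, and
the edges `x u₁¹`, `u_{s+1}ᵗ y`, and `vᵢ uᵢᵗ`, `vᵢ u_{i+1}¹`, `wᵢ uᵢᵗ`, `wᵢ u_{i+1}¹`. -/
def H3graph (s t : ℕ) :
    SimpleGraph ((Fin (s + 1) × Fin t) ⊕ ((Fin s × Fin 2) ⊕ Fin 2)) :=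
  SimpleGraph.fromRel (fun a b =>
    match a, b with
    | Sum.inl (i, j), Sum.inl (i', j') => i = i' ∧ (j : ℕ) + 1 = (j' : ℕ)
    | Sum.inl (i, j), Sum.inr (Sum.inl (k, _)) =>
        ((i : ℕ) = (k : ℕ) ∧ (j : ℕ) = t - 1) ∨ ((i : ℕ) = (k : ℕ) + 1 ∧ (j : ℕ) = 0)
    | Sum.inl (i, j), Sum.inr (Sum.inr m) =>
        ((m : ℕ) = 0 ∧ (i : ℕ) = 0 ∧ (j : ℕ) = 0) ∨
          ((m : ℕ) = 1 ∧ (i : ℕ) = s ∧ (j : ℕ) = t - 1)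
    | _, _ => False)

/-- `H⁴_{s,t}`: `H³_{s,t}` together with the edges `uᵢᵗ u_{i+1}¹` for `i ∈ [s]`. -/
def H4graph (s t : ℕ) :
    SimpleGraph ((Fin (s + 1) × Fin t) ⊕ ((Fin s × Fin 2) ⊕ Fin 2)) :=
  SimpleGraph.fromRel (fun a b =>
    match a, b with
    | Sum.inl (i, j), Sum.inl (i', j') =>
        (i = i' ∧ (j : ℕ) + 1 = (j' : ℕ)) ∨
          ((i : ℕ) + 1 = (i' : ℕ) ∧ (j : ℕ) = t - 1 ∧ (j' : ℕ) = 0)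
    | Sum.inl (i, j), Sum.inr (Sum.inl (k, _)) =>
        ((i : ℕ) = (k : ℕ) ∧ (j : ℕ) = t - 1) ∨ ((i : ℕ) = (k : ℕ) + 1 ∧ (j : ℕ) = 0)
    | Sum.inl (i, j), Sum.inr (Sum.inr m) =>
        ((m : ℕ) = 0 ∧ (i : ℕ) = 0 ∧ (j : ℕ) = 0) ∨
          ((m : ℕ) = 1 ∧ (i : ℕ) = s ∧ (j : ℕ) = t - 1)
    | _, _ => False)

/-- `H̃ᵖ_{s,t}`: the union of `s+1` disjoint paths `Qᵢ` on `t` vertices and `s` disjoint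
copies `Rᵢ` of `T p` with ends `vᵢ = (i, end)`, together with the edges
`uᵢᵗ u_{i+1}¹`, `uᵢᵗ vᵢ`, `u_{i+1}¹ vᵢ` for `i ∈ [s]`. -/
def Htilde (s t p : ℕ) :
    SimpleGraph ((Fin (s + 1) × Fin t) ⊕ (Fin s × (Fin p ⊕ Fin 2))) :=
  SimpleGraph.fromRel (fun a b =>
    match a, b with
    | Sum.inl (i, j), Sum.inl (i', j') =>
        (i = i' ∧ (j : ℕ) + 1 = (j' : ℕ)) ∨
          ((i : ℕ) + 1 = (i' : ℕ) ∧ (j : ℕ) = t - 1 ∧ (j' : ℕ) = 0)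
    | Sum.inl (i, j), Sum.inr (k, x) =>
        isTEnd x ∧ (((i : ℕ) = (k : ℕ) ∧ (j : ℕ) = t - 1) ∨
          ((i : ℕ) = (k : ℕ) + 1 ∧ (j : ℕ) = 0))
    | Sum.inr (k, x), Sum.inr (k', y) => k = k' ∧ (Tgraph p).Adj x y
    | _, _ => False)

/-- A finite graph, encoded as a simple graph on some `Fin n`. -/
abbrev GraphFam := Set (Σ n : ℕ, SimpleGraph (Fin n))

/-- `Below 𝓗 G` means that some member of the family `𝓗` is (isomorphic to) an induced
subgraph of `G`; so `𝓗 ≤ 𝓗₂` iff `Below 𝓗 G` holds for every `G ∈ 𝓗₂`. -/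
def Below (𝓗 : GraphFam) {W : Type*} (G : SimpleGraph W) : Prop :=
  ∃ H ∈ 𝓗, Nonempty (H.2 ↪g G)

/-- The relation `𝓗₁ ≤ 𝓗₂` between families of graphs: every member of `𝓗₂` contains an
induced subgraph isomorphic to some member of `𝓗₁`. -/
def FamLE (𝓗₁ 𝓗₂ : GraphFam) : Prop :=
  ∀ H ∈ 𝓗₂, Below 𝓗₁ H.2

/-- The induced matching number `ν'(G)`. -/
noncomputable def indMatchNum {V : Type*} [Fintype V] (G : SimpleGraph V) : ℕ :=
  sSup {k : ℕ | ∃ M : G.Subgraph, M.IsInduced ∧ M.IsMatching ∧ M.verts.ncard = 2 * k}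


abbrev HVert (s m : ℕ) := (Fin (s + 1) × Fin (2 * m + 1)) ⊕ ((Fin s × Fin 2) ⊕ Fin 2)

def fH (s m : ℕ) : HVert s m → HVert s m
  | Sum.inl (i, j) =>
    if hj : (j : ℕ) = 2 * m then
      if hi : (i : ℕ) < s then Sum.inr (Sum.inl (⟨(i : ℕ), hi⟩, 0)) else Sum.inr (Sum.inr 1)
    else if Even (j : ℕ) then
      Sum.inl (i, ⟨(j : ℕ) + 1, by have := j.isLt; omega⟩)
    else Sum.inl (i, ⟨(j : ℕ) - 1, by have := j.isLt; omega⟩)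
  | Sum.inr (Sum.inl (k, l)) =>
    if (l : ℕ) = 0 then Sum.inl (⟨(k : ℕ), by have := k.isLt; omega⟩, ⟨2 * m, by omega⟩)
    else Sum.inr (Sum.inl (k, l))
  | Sum.inr (Sum.inr z) =>
    if (z : ℕ) = 1 then Sum.inl (⟨s, by omega⟩, ⟨2 * m, by omega⟩) else Sum.inr (Sum.inr z)

section evalLemmas
variable {s m : ℕ}

lemma fH_last_lt {i : Fin (s+1)} {j : Fin (2*m+1)} (hj : (j : ℕ) = 2 * m)
    (hi : (i : ℕ) < s) : fH s m (Sum.inl (i, j)) = Sum.inr (Sum.inl (⟨(i : ℕ), hi⟩, 0)) := by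
  simp only [fH]; rw [dif_pos hj, dif_pos hi]

lemma fH_last_eq {i : Fin (s+1)} {j : Fin (2*m+1)} (hj : (j : ℕ) = 2 * m)
    (hi : ¬ (i : ℕ) < s) : fH s m (Sum.inl (i, j)) = Sum.inr (Sum.inr 1) := by
  simp only [fH]; rw [dif_pos hj, dif_neg hi]

lemma fH_even {i : Fin (s+1)} {j : Fin (2*m+1)} (hj : ¬ (j : ℕ) = 2 * m)
    (he : Even (j : ℕ)) (h : (j : ℕ) + 1 < 2*m+1) :
    fH s m (Sum.inl (i, j)) = Sum.inl (i, ⟨(j : ℕ) + 1, h⟩) := by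
  simp only [fH]; rw [dif_neg hj, if_pos he]

lemma fH_odd {i : Fin (s+1)} {j : Fin (2*m+1)} (hj : ¬ (j : ℕ) = 2 * m)
    (he : ¬ Even (j : ℕ)) (h : (j : ℕ) - 1 < 2*m+1) :
    fH s m (Sum.inl (i, j)) = Sum.inl (i, ⟨(j : ℕ) - 1, h⟩) := by
  simp only [fH]; rw [dif_neg hj, if_neg he]

lemma fH_v {k : Fin s} {l : Fin 2} (hl : (l : ℕ) = 0) (h1 : (k:ℕ) < s+1) (h2 : 2*m < 2*m+1) :
    fH s m (Sum.inr (Sum.inl (k, l))) = Sum.inl (⟨(k : ℕ), h1⟩, ⟨2 * m, h2⟩) := by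
  simp only [fH]; rw [if_pos hl]

lemma fH_w {k : Fin s} {l : Fin 2} (hl : ¬ (l : ℕ) = 0) :
    fH s m (Sum.inr (Sum.inl (k, l))) = Sum.inr (Sum.inl (k, l)) := by
  simp only [fH]; rw [if_neg hl]

lemma fH_y {z : Fin 2} (hz : (z : ℕ) = 1) (h1 : s < s+1) (h2 : 2*m < 2*m+1) :
    fH s m (Sum.inr (Sum.inr z)) = Sum.inl (⟨s, h1⟩, ⟨2 * m, h2⟩) := by
  simp only [fH]; rw [if_pos hz]

lemma fH_x {z : Fin 2} (hz : ¬ (z : ℕ) = 1) :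
    fH s m (Sum.inr (Sum.inr z)) = Sum.inr (Sum.inr z) := by
  simp only [fH]; rw [if_neg hz]

lemma fH_invol : ∀ v : HVert s m, fH s m (fH s m v) = v := by
  rintro (⟨i, j⟩ | (⟨k, l⟩ | z))
  · by_cases hj : (j : ℕ) = 2 * m
    · by_cases hi : (i : ℕ) < s
      · rw [fH_last_lt hj hi, fH_v rfl (by omega) (by omega)]
        simp [Prod.ext_iff, Fin.ext_iff, hj]
      · rw [fH_last_eq hj hi, fH_y rfl (by omega) (by omega)]
        have : (i : ℕ) = s := by have := i.isLt; omega
        simp [Prod.ext_iff, Fin.ext_iff, hj, this]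
    · by_cases he : Even (j : ℕ)
      · have hlt : (j : ℕ) + 1 < 2*m+1 := by have := j.isLt; omega
        have h1 : ¬ ((j : ℕ) + 1 = 2 * m) := by rcases he with ⟨r, hr⟩; omega
        have h2 : ¬ Even ((j : ℕ) + 1) := by
          rcases he with ⟨r, hr⟩; rintro ⟨c, hc⟩; omega
        rw [fH_even hj he hlt, fH_odd h1 h2 (by omega)]
        simp [Prod.ext_iff, Fin.ext_iff]
      · have hj0 : 1 ≤ (j : ℕ) := by
          rcases Nat.even_or_odd (j : ℕ) with h | ⟨r, hr⟩
          · exact absurd h he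
          · omega
        have hlt : (j : ℕ) - 1 < 2*m+1 := by have := j.isLt; omega
        have h1 : ¬ ((j : ℕ) - 1 = 2 * m) := by have := j.isLt; omega
        have h2 : Even ((j : ℕ) - 1) := by
          rcases Nat.even_or_odd ((j:ℕ) - 1) with h | ⟨r, hr⟩
          · exact h
          · exact absurd ⟨r+1, by omega⟩ he
        rw [fH_odd hj he hlt, fH_even h1 h2 (show (j:ℕ) - 1 + 1 < 2*m+1 by omega)]
        simp [Prod.ext_iff, Fin.ext_iff]; omega
  · by_cases hl : (l : ℕ) = 0
    · rw [fH_v hl (by have := k.isLt; omega) (by omega), fH_last_lt rfl k.isLt]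
      have : l = 0 := Fin.ext hl
      simp [this]
    · rw [fH_w hl, fH_w hl]
  · by_cases hz : (z : ℕ) = 1
    · rw [fH_y hz (by omega) (by omega), fH_last_eq rfl (lt_irrefl s)]
      have : z = 1 := Fin.ext hz
      simp [this]
    · rw [fH_x hz, fH_x hz]
end evalLemmas

section adjLemmas
variable {s m : ℕ}

lemma fH_adj_H3 : ∀ v : HVert s m, fH s m v ≠ v →
    (H3graph s (2*m+1)).Adj v (fH s m v) := by
  have hne : ∀ (a : Fin (s+1) × Fin (2*m+1)) b,
      (Sum.inl a : HVert s m) ≠ Sum.inr b := by simp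
  rintro (⟨i, j⟩ | (⟨k, l⟩ | z)) hv
  · by_cases hj : (j : ℕ) = 2 * m
    · by_cases hi : (i : ℕ) < s
      · rw [fH_last_lt hj hi]
        rw [H3graph, fromRel_adj]
        refine ⟨hne _ _, Or.inl ?_⟩
        exact Or.inl ⟨rfl, by omega⟩
      · rw [fH_last_eq hj hi]
        rw [H3graph, fromRel_adj]
        refine ⟨hne _ _, Or.inl ?_⟩
        have : (i:ℕ) = s := by have := i.isLt; omega
        exact Or.inr ⟨by norm_num, this, by omega⟩
    · by_cases he : Even (j : ℕ)
      · rw [fH_even hj he (by have := j.isLt; omega)]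
        rw [H3graph, fromRel_adj]
        refine ⟨by simp [Prod.ext_iff, Fin.ext_iff], Or.inl ⟨rfl, rfl⟩⟩
      · have hj0 : 1 ≤ (j : ℕ) := by
          rcases Nat.even_or_odd (j : ℕ) with h | ⟨r, hr⟩
          · exact absurd h he
          · omega
        rw [fH_odd hj he (by have := j.isLt; omega)]
        rw [H3graph, fromRel_adj]
        refine ⟨by simp [Prod.ext_iff, Fin.ext_iff]; omega, Or.inr ⟨rfl, by simp; omega⟩⟩
  · by_cases hl : (l : ℕ) = 0
    · rw [fH_v hl (by have := k.isLt; omega) (by omega)]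
      rw [H3graph, fromRel_adj]
      exact ⟨(hne _ _).symm, Or.inr (Or.inl ⟨rfl, rfl⟩)⟩
    · exact absurd (fH_w hl) hv
  · by_cases hz : (z : ℕ) = 1
    · rw [fH_y hz (by omega) (by omega)]
      rw [H3graph, fromRel_adj]
      exact ⟨(hne _ _).symm, Or.inr (Or.inr ⟨hz, rfl, show 2*m = 2*m+1-1 by omega⟩)⟩
    · exact absurd (fH_x hz) hv

end adjLemmas


section count
variable {s m : ℕ}

/-- enumeration of the vertices missed by the matching -/
def gW (s m : ℕ) : Fin (s+1) → HVert s m := fun k =>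
  if h : (k:ℕ) < s then Sum.inr (Sum.inl (⟨(k:ℕ), h⟩, 1)) else Sum.inr (Sum.inr 0)

lemma gW_inj : Function.Injective (gW s m) := by
  intro a b hab
  by_cases ha : (a:ℕ) < s <;> by_cases hb : (b:ℕ) < s <;>
    simp only [gW, ha, hb, dif_pos, dif_neg, not_false_iff] at hab ⊢
  · simp only [Sum.inr.injEq, Sum.inl.injEq, Prod.mk.injEq, Fin.mk.injEq] at hab
    exact Fin.ext hab.1
  · exact absurd hab (by simp)
  · exact absurd hab (by simp)
  · apply Fin.ext; have := a.isLt; have := b.isLt; omega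

lemma fixed_eq : {v : HVert s m | fH s m v = v} = Set.range (gW s m) := by
  ext v
  simp only [Set.mem_setOf_eq, Set.mem_range]
  constructor
  · rintro hfix
    rcases v with ⟨i, j⟩ | (⟨k, l⟩ | z)
    · exfalso
      by_cases hj : (j : ℕ) = 2 * m
      · by_cases hi : (i : ℕ) < s
        · rw [fH_last_lt hj hi] at hfix; exact absurd hfix (by simp)
        · rw [fH_last_eq hj hi] at hfix; exact absurd hfix (by simp)
      · by_cases he : Even (j : ℕ)
        · rw [fH_even hj he (by have := j.isLt; omega)] at hfix
          have := congrArg Fin.val (Prod.ext_iff.1 (Sum.inl.inj hfix)).2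
          simp at this
        · rw [fH_odd hj he (by have := j.isLt; omega)] at hfix
          have h1 : 1 ≤ (j : ℕ) := by
            rcases Nat.even_or_odd (j : ℕ) with h | ⟨r, hr⟩
            · exact absurd h he
            · omega
          have := congrArg Fin.val (Prod.ext_iff.1 (Sum.inl.inj hfix)).2
          simp at this; omega
    · by_cases hl : (l : ℕ) = 0
      · rw [fH_v hl (by have := k.isLt; omega) (by omega)] at hfix
        exact absurd hfix (by simp)
      · have hklt : (k:ℕ) < s + 1 := by have := k.isLt; omega
        refine ⟨⟨(k:ℕ), hklt⟩, ?_⟩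
        have hl1 : l = 1 := by apply Fin.ext; have := l.isLt; simp; omega
        simp only [gW]
        rw [dif_pos (show ((⟨(k:ℕ), hklt⟩ : Fin (s+1)):ℕ) < s from k.isLt)]
        simp [hl1]
    · by_cases hz : (z : ℕ) = 1
      · rw [fH_y hz (by omega) (by omega)] at hfix
        exact absurd hfix (by simp)
      · have hslt : s < s + 1 := by omega
        refine ⟨⟨s, hslt⟩, ?_⟩
        have hz0 : z = 0 := by apply Fin.ext; have := z.isLt; simp; omega
        simp only [gW]
        rw [dif_neg (show ¬ ((⟨s, hslt⟩ : Fin (s+1)):ℕ) < s from by simp)]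
        simp [hz0]
  · rintro ⟨a, rfl⟩
    by_cases ha : (a:ℕ) < s
    · simp only [gW, dif_pos ha]
      exact fH_w (by norm_num)
    · simp only [gW, dif_neg ha]
      exact fH_x (by norm_num)

lemma fixed_ncard : {v : HVert s m | fH s m v = v}.ncard = s + 1 := by
  rw [fixed_eq, ← Nat.card_coe_set_eq, Nat.card_range_of_injective gW_inj]
  simp [Nat.card_eq_fintype_card]

lemma cardV : Nat.card (HVert s m) = (s+1)*(2*m+2) + (s+1) := by
  simp [Nat.card_eq_fintype_card]
  ring

lemma nonfixed_ncard : {v : HVert s m | fH s m v ≠ v}.ncard = (s+1)*(2*m+2) := by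
  have hc : {v : HVert s m | fH s m v ≠ v} = {v : HVert s m | fH s m v = v}ᶜ := by
    ext v; simp
  have := Set.ncard_add_ncard_compl {v : HVert s m | fH s m v = v}
  rw [fixed_ncard, cardV] at this
  rw [hc]
  omega

end count


section upper
variable {s m : ℕ}

lemma H4_cover (a b : HVert s m) (h : (H4graph s (2*m+1)).Adj a b) :
    (∃ (i : Fin (s+1)) (j : Fin (2*m+1)), a = Sum.inl (i,j) ∧ (j:ℕ) % 2 = 0) ∨
    (∃ (i : Fin (s+1)) (j : Fin (2*m+1)), b = Sum.inl (i,j) ∧ (j:ℕ) % 2 = 0) := by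
  rw [H4graph, fromRel_adj] at h
  obtain ⟨-, h⟩ := h
  rcases a with ⟨i, j⟩ | (⟨k, l⟩ | z) <;> rcases b with ⟨i', j'⟩ | (⟨k', l'⟩ | z')
  · rcases h with (⟨-, hj⟩ | ⟨-, hj, hj'⟩) | (⟨-, hj⟩ | ⟨-, hj', hj⟩)
    · by_cases hp : (j:ℕ) % 2 = 0
      · exact Or.inl ⟨i, j, rfl, hp⟩
      · exact Or.inr ⟨i', j', rfl, by omega⟩
    · exact Or.inl ⟨i, j, rfl, by omega⟩
    · by_cases hp : (j':ℕ) % 2 = 0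
      · exact Or.inr ⟨i', j', rfl, hp⟩
      · exact Or.inl ⟨i, j, rfl, by omega⟩
    · exact Or.inr ⟨i', j', rfl, by omega⟩
  · rcases h with (⟨-, hj⟩ | ⟨-, hj⟩) | h
    · exact Or.inl ⟨i, j, rfl, by omega⟩
    · exact Or.inl ⟨i, j, rfl, by omega⟩
    · exact h.elim
  · rcases h with (⟨-, -, hj⟩ | ⟨-, -, hj⟩) | h
    · exact Or.inl ⟨i, j, rfl, by omega⟩
    · exact Or.inl ⟨i, j, rfl, by omega⟩
    · exact h.elim
  · rcases h with h | (⟨-, hj⟩ | ⟨-, hj⟩)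
    · exact h.elim
    · exact Or.inr ⟨i', j', rfl, by omega⟩
    · exact Or.inr ⟨i', j', rfl, by omega⟩
  · exact h.elim (fun h => h.elim) (fun h => h.elim)
  · exact h.elim (fun h => h.elim) (fun h => h.elim)
  · rcases h with h | (⟨-, -, hj⟩ | ⟨-, -, hj⟩)
    · exact h.elim
    · exact Or.inr ⟨i', j', rfl, by omega⟩
    · exact Or.inr ⟨i', j', rfl, by omega⟩
  · exact h.elim (fun h => h.elim) (fun h => h.elim)
  · exact h.elim (fun h => h.elim) (fun h => h.elim)

lemma H3_le_H4 (a b : HVert s m) (h : (H3graph s (2*m+1)).Adj a b) :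
    (H4graph s (2*m+1)).Adj a b := by
  rw [H3graph, fromRel_adj] at h
  rw [H4graph, fromRel_adj]
  obtain ⟨hne, h⟩ := h
  refine ⟨hne, ?_⟩
  rcases a with ⟨i, j⟩ | (⟨k, l⟩ | z) <;> rcases b with ⟨i', j'⟩ | (⟨k', l'⟩ | z') <;>
    first
      | exact h.imp (fun hh => Or.inl hh) (fun hh => Or.inl hh)
      | exact h

lemma matching_ub (G : SimpleGraph (HVert s m))
    (h2 : ∀ a b, G.Adj a b → (H4graph s (2*m+1)).Adj a b)
    (M : G.Subgraph) (hM : M.IsMatching) : M.verts.ncard ≤ (s+1)*(2*m+2) := by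
  classical
  set C : Set (HVert s m) :=
    {a | ∃ (i : Fin (s+1)) (j : Fin (2*m+1)), a = Sum.inl (i,j) ∧ (j:ℕ) % 2 = 0} with hCdef
  have hinj : Function.Injective (fun p : Fin (s+1) × Fin (m+1) =>
      (Sum.inl (p.1, ⟨2*(p.2:ℕ), by have := p.2.isLt; omega⟩) : HVert s m)) := by
    intro p q hpq
    simp only [Sum.inl.injEq, Prod.mk.injEq, Fin.mk.injEq] at hpq
    obtain ⟨hq1, hq2⟩ := hpq
    exact Prod.ext hq1 (Fin.ext (by omega))
  have hCcard : C.ncard ≤ (s+1)*(m+1) := by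
    have hsub : C ⊆ Set.range (fun p : Fin (s+1) × Fin (m+1) =>
        (Sum.inl (p.1, ⟨2*(p.2:ℕ), by have := p.2.isLt; omega⟩) : HVert s m)) := by
      rintro a ⟨i, j, rfl, hj⟩
      refine ⟨(i, ⟨(j:ℕ)/2, by have := j.isLt; omega⟩), ?_⟩
      exact congrArg Sum.inl (Prod.ext rfl (Fin.ext (show 2*((j:ℕ)/2) = (j:ℕ) by omega)))
    calc C.ncard ≤ _ := Set.ncard_le_ncard hsub (Set.toFinite _)
      _ = (s+1)*(m+1) := by
        rw [← Nat.card_coe_set_eq, Nat.card_range_of_injective hinj]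
        simp [Nat.card_eq_fintype_card]
  let p : HVert s m → HVert s m := fun v => if h : v ∈ M.verts then (hM h).choose else v
  have hp : ∀ v, v ∈ M.verts → M.Adj v (p v) := by
    intro v hv
    simp only [p, dif_pos hv]
    exact (hM hv).choose_spec.1
  have hdiff : (M.verts \ C).ncard ≤ (M.verts ∩ C).ncard := by
    apply Set.ncard_le_ncard_of_injOn p ?_ ?_ (Set.toFinite _)
    · rintro v ⟨hv, hvc⟩
      have hadj := hp v hv
      refine ⟨M.edge_vert (M.adj_symm hadj), ?_⟩
      rcases H4_cover _ _ (h2 _ _ (M.adj_sub hadj)) with h | h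
      · exact absurd h hvc
      · exact h
    · rintro u ⟨hu, -⟩ v ⟨hv, -⟩ huv
      have ha := hp u hu
      have hb := hp v hv
      rw [huv] at ha
      have hw : p v ∈ M.verts := M.edge_vert (M.adj_symm hb)
      exact ExistsUnique.unique (hM hw) (M.adj_symm ha) (M.adj_symm hb)
  have hsplit := Set.ncard_inter_add_ncard_diff_eq_ncard M.verts C (Set.toFinite _)
  have hint : (M.verts ∩ C).ncard ≤ C.ncard :=
    Set.ncard_le_ncard Set.inter_subset_right (Set.toFinite _)
  calc M.verts.ncard = (M.verts ∩ C).ncard + (M.verts \ C).ncard := hsplit.symm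
    _ ≤ C.ncard + C.ncard := Nat.add_le_add hint (hdiff.trans hint)
    _ ≤ (s+1)*(m+1) + (s+1)*(m+1) := Nat.add_le_add hCcard hCcard
    _ = (s+1)*(2*m+2) := by ring

lemma deficiency_between (s m : ℕ) (G : SimpleGraph (HVert s m))
    (h1 : ∀ a b, (H3graph s (2*m+1)).Adj a b → G.Adj a b)
    (h2 : ∀ a b, G.Adj a b → (H4graph s (2*m+1)).Adj a b) :
    deficiency G = s + 1 := by
  classical
  let M : G.Subgraph :=
    { verts := {v | fH s m v ≠ v}
      Adj := fun a b => fH s m a = b ∧ a ≠ b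
      adj_sub := by
        rintro a b ⟨hab, hne⟩
        subst hab
        exact h1 _ _ (fH_adj_H3 a (Ne.symm hne))
      edge_vert := by
        rintro a b ⟨hab, hne⟩
        simp only [Set.mem_setOf_eq]
        rw [hab]
        exact Ne.symm hne
      symm := by
        constructor
        rintro a b ⟨hab, hne⟩
        exact ⟨by rw [← hab, fH_invol], hne.symm⟩ }
  have hM : M.IsMatching := by
    intro v hv
    refine ⟨fH s m v, ⟨rfl, Ne.symm hv⟩, ?_⟩
    rintro w ⟨hw, -⟩
    exact hw.symm
  have hcard : M.verts.ncard = (s+1)*(2*m+2) := nonfixed_ncard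
  have hmem : (s+1)*(2*m+2) ∈
      {k : ℕ | ∃ N : G.Subgraph, N.IsMatching ∧ N.verts.ncard = k} := ⟨M, hM, hcard⟩
  have hub : ∀ k ∈ {k : ℕ | ∃ N : G.Subgraph, N.IsMatching ∧ N.verts.ncard = k},
      k ≤ (s+1)*(2*m+2) := by
    rintro k ⟨N, hN, rfl⟩
    exact matching_ub G h2 N hN
  have hsup : sSup {k : ℕ | ∃ N : G.Subgraph, N.IsMatching ∧ N.verts.ncard = k}
      = (s+1)*(2*m+2) :=
    le_antisymm (csSup_le ⟨_, hmem⟩ hub) (le_csSup ⟨_, hub⟩ hmem)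
  unfold deficiency
  rw [hsup]
  have hv : Fintype.card (HVert s m) = (s+1)*(2*m+2) + (s+1) := by
    rw [← Nat.card_eq_fintype_card]; exact cardV
  rw [hv, Nat.add_sub_cancel_left]

end upper


/-- For every positive integer `s` and every odd (positive) integer `t`, the deficiencies
of `H³_{s,t}` and of `H⁴_{s,t}` both equal `s + 1`. -/
theorem deficiency_H3_H4 (s t : ℕ) (hs : 1 ≤ s) (ht : Odd t) :
    deficiency (H3graph s t) = s + 1 ∧ deficiency (H4graph s t) = s + 1 := by
  obtain ⟨m, rfl⟩ := ht
  constructor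
  · exact deficiency_between s m _ (fun a b h => h) (fun a b h => H3_le_H4 a b h)
  · exact deficiency_between s m _ (fun a b h => H3_le_H4 a b h) (fun a b h => h)
end

section
/- For all positive integers n and p, there exists a bipartite graph G with vertex partition sets X and Y such that every vertex of X has degree at least 1, every vertex of Y has degree at most n, |X| = n(p − 1), and the induced matching number of G is exactly p − 1. Hence the bound |X| ≥ n(p − 1) + 1 in the induced matching lemma is tight. -/
open SimpleGraph

/-- Disjoint union of `q` stars `K_{1,n}`. -/
def tightG (q n : ℕ) : SimpleGraph (Fin q × (Unit ⊕ Fin n)) where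
  Adj a b := a.1 = b.1 ∧ ((a.2.isLeft ∧ b.2.isRight) ∨ (a.2.isRight ∧ b.2.isLeft))
  symm := by
    constructor
    rintro a b ⟨h1, h2⟩
    exact ⟨h1.symm, by tauto⟩
  loopless := by
    constructor
    rintro a ⟨-, h⟩
    rcases a with ⟨i, x | x⟩ <;> simp_all

lemma tightG_adj {q n : ℕ} {a b : Fin q × (Unit ⊕ Fin n)} :
    (tightG q n).Adj a b ↔ a.1 = b.1 ∧ ((a.2.isLeft ∧ b.2.isRight) ∨ (a.2.isRight ∧ b.2.isLeft)) :=
  Iff.rfl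

lemma tightG_matching_bound {q n : ℕ} (M : (tightG q n).Subgraph) (hM : M.IsMatching) :
    M.verts.ncard ≤ 2 * q := by
  classical
  -- key: any leaf in verts is matched to its center
  have key : ∀ (i : Fin q) (j : Fin n), (i, Sum.inr j) ∈ M.verts →
      M.Adj (i, Sum.inr j) (i, Sum.inl ()) := by
    intro i j hmem
    obtain ⟨w, hw, -⟩ := hM hmem
    have hadj := M.adj_sub hw
    rw [tightG_adj] at hadj
    obtain ⟨h1, h2⟩ := hadj
    rcases w with ⟨i', (⟨⟩ | j')⟩
    · simp only at h1; subst h1; exact hw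
    · simp at h2
  have hfin : M.verts.Finite := Set.toFinite _
  rw [Set.ncard_eq_toFinset_card _ hfin]
  set s := hfin.toFinset with hs
  have hb : s.card ≤ 2 * (s.image Prod.fst).card := by
    apply Finset.card_le_mul_card_image
    intro i _
    by_contra hlt
    push_neg at hlt
    obtain ⟨a, ha, b, hb, c, hc, hab, hac, hbc⟩ := Finset.two_lt_card.mp hlt
    simp only [Finset.mem_filter, hs, Set.Finite.mem_toFinset] at ha hb hc
    obtain ⟨ha, hai⟩ := ha; obtain ⟨hb, hbi⟩ := hb; obtain ⟨hc, hci⟩ := hc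
    -- among a b c, two are leaves
    have two_leaves : ∃ u v : Fin n, u ≠ v ∧ (i, Sum.inr u) ∈ M.verts ∧ (i, Sum.inr v) ∈ M.verts := by
      rcases a with ⟨ia, (⟨⟩|ja)⟩ <;> rcases b with ⟨ib, (⟨⟩|jb)⟩ <;>
        rcases c with ⟨ic, (⟨⟩|jc)⟩ <;> simp_all <;>
        first
        | exact ⟨jb, jc, by rintro rfl; exact hbc rfl, hb, hc⟩
        | exact ⟨ja, jc, by rintro rfl; exact hac rfl, ha, hc⟩
        | exact ⟨ja, jb, by rintro rfl; exact hab rfl, ha, hb⟩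
    obtain ⟨u, v, huv, hu, hv⟩ := two_leaves
    have h1 := key i u hu
    have h2 := key i v hv
    have hcen : (i, (Sum.inl () : Unit ⊕ Fin n)) ∈ M.verts := M.edge_vert h1.symm
    obtain ⟨w, -, hwu⟩ := hM hcen
    have := (hwu _ h1.symm).trans (hwu _ h2.symm).symm
    exact huv (by simpa using this)
  refine hb.trans ?_
  have : (s.image Prod.fst).card ≤ (Finset.univ : Finset (Fin q)).card :=
    Finset.card_le_card (Finset.subset_univ _)
  simpa using Nat.mul_le_mul_left 2 (this.trans_eq (by simp))

/-- The canonical perfect-per-star induced matching: center matched to leaf `0`. -/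
def tightM (q n : ℕ) (hn : 0 < n) : (tightG q n).Subgraph where
  verts := {v | v.2 = Sum.inl () ∨ v.2 = Sum.inr ⟨0, hn⟩}
  Adj a b := a.1 = b.1 ∧ ((a.2 = Sum.inl () ∧ b.2 = Sum.inr ⟨0, hn⟩) ∨
    (a.2 = Sum.inr ⟨0, hn⟩ ∧ b.2 = Sum.inl ()))
  adj_sub := by
    rintro a b ⟨h1, h2⟩
    refine ⟨h1, ?_⟩
    rcases h2 with ⟨h2, h3⟩ | ⟨h2, h3⟩ <;> rw [h2, h3] <;> simp
  edge_vert := by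
    rintro a b ⟨h1, h2⟩
    rcases h2 with ⟨h2, -⟩ | ⟨h2, -⟩ <;> [left; right] <;> exact h2
  symm := by
    constructor
    rintro a b ⟨h1, h2⟩
    exact ⟨h1.symm, by tauto⟩

lemma tightM_isInduced (q n : ℕ) (hn : 0 < n) : (tightM q n hn).IsInduced := by
  rintro ⟨i, x⟩ hv ⟨i', y⟩ hw hadj
  rw [tightG_adj] at hadj
  obtain ⟨h1, h2⟩ := hadj
  simp only [tightM, Set.mem_setOf_eq] at hv hw
  refine ⟨h1, ?_⟩
  rcases hv with rfl | rfl <;> rcases hw with rfl | rfl <;> simp_all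

lemma tightM_isMatching (q n : ℕ) (hn : 0 < n) : (tightM q n hn).IsMatching := by
  rintro ⟨i, x⟩ hv
  simp only [tightM, Set.mem_setOf_eq] at hv
  rcases hv with rfl | rfl
  · exact ⟨(i, Sum.inr ⟨0, hn⟩), ⟨rfl, by simp⟩, by
      rintro ⟨i', y⟩ ⟨h1, h2⟩
      simp only at h1; subst h1
      rcases h2 with ⟨-, h3⟩ | ⟨h2, -⟩
      · simp only at h3; rw [h3]
      · simp at h2⟩
  · exact ⟨(i, Sum.inl ()), ⟨rfl, by simp⟩, by
      rintro ⟨i', y⟩ ⟨h1, h2⟩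
      simp only at h1; subst h1
      rcases h2 with ⟨h2, -⟩ | ⟨-, h3⟩
      · simp at h2
      · simp only at h3; rw [h3]⟩

lemma tightM_verts_ncard (q n : ℕ) (hn : 0 < n) : (tightM q n hn).verts.ncard = 2 * q := by
  classical
  have : (tightM q n hn).verts =
      (fun i : Fin q × Fin 2 => (i.1, if i.2 = 0 then (Sum.inl () : Unit ⊕ Fin n) else Sum.inr ⟨0, hn⟩)) '' Set.univ := by
    ext ⟨i, x⟩
    simp only [tightM, Set.mem_setOf_eq, Set.image_univ, Set.mem_range]
    constructor
    · rintro (rfl | rfl)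
      · exact ⟨(i, 0), by simp⟩
      · exact ⟨(i, 1), by simp⟩
    · rintro ⟨⟨j, k⟩, hk⟩
      rcases Prod.mk.injEq .. ▸ hk with ⟨rfl, rfl⟩
      split <;> simp
  rw [this, Set.ncard_image_of_injective _ ?_, Set.ncard_univ]
  · simp [Nat.card_eq_fintype_card, mul_comm]
  · rintro ⟨i, k⟩ ⟨i', k'⟩ h
    simp only [Prod.mk.injEq] at h
    obtain ⟨rfl, h2⟩ := h
    congr
    fin_cases k <;> fin_cases k' <;> simp_all

lemma tightG_indMatchNum (q n : ℕ) (hn : 0 < n) : indMatchNum (tightG q n) = q := by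
  have hmem : q ∈ {k : ℕ | ∃ M : (tightG q n).Subgraph,
      M.IsInduced ∧ M.IsMatching ∧ M.verts.ncard = 2 * k} :=
    ⟨tightM q n hn, tightM_isInduced q n hn, tightM_isMatching q n hn, tightM_verts_ncard q n hn⟩
  have hub : ∀ k ∈ {k : ℕ | ∃ M : (tightG q n).Subgraph,
      M.IsInduced ∧ M.IsMatching ∧ M.verts.ncard = 2 * k}, k ≤ q := by
    rintro k ⟨M, -, hM, hcard⟩
    have := tightG_matching_bound M hM
    omega
  exact le_antisymm (csSup_le ⟨q, hmem⟩ hub) (le_csSup ⟨q, hub⟩ hmem)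

/-- The bound `|X| ≥ n(p − 1) + 1` in the induced matching lemma is tight: for all
positive integers `n` and `p` there is a bipartite graph `G` with parts `X` and `Y`,
every vertex of `X` of degree at least `1`, every vertex of `Y` of degree at most `n`,
`|X| = n(p − 1)`, whose induced matching number is exactly `p − 1`. -/
theorem induced_matching_bound_tight (n p : ℕ) (hn : 1 ≤ n) (hp : 1 ≤ p) :
    ∃ (V : Type) (_ : Fintype V) (G : SimpleGraph V) (X Y : Set V),
      Disjoint X Y ∧ X ∪ Y = Set.univ ∧
      (∀ u v : V, G.Adj u v → (u ∈ X ∧ v ∈ Y) ∨ (u ∈ Y ∧ v ∈ X)) ∧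
      (∀ x ∈ X, 1 ≤ (G.neighborSet x).ncard) ∧
      (∀ y ∈ Y, (G.neighborSet y).ncard ≤ n) ∧
      X.ncard = n * (p - 1) ∧
      indMatchNum G = p - 1 := by
  set q := p - 1 with hq
  refine ⟨Fin q × (Unit ⊕ Fin n), inferInstance, tightG q n,
    {v | v.2.isRight}, {v | v.2.isLeft}, ?_, ?_, ?_, ?_, ?_, ?_, tightG_indMatchNum q n hn⟩
  · rw [Set.disjoint_left]
    rintro ⟨i, x⟩ h1 h2
    rcases x with x | x <;> simp_all
  · ext ⟨i, x⟩
    rcases x with x | x <;> simp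
  · rintro u v hadj
    rw [tightG_adj] at hadj
    rcases hadj.2 with ⟨h1, h2⟩ | ⟨h1, h2⟩
    · exact Or.inr ⟨h1, h2⟩
    · exact Or.inl ⟨h1, h2⟩
  · rintro ⟨i, x⟩ hx
    rcases x with x | j
    · simp at hx
    · have : (i, (Sum.inl () : Unit ⊕ Fin n)) ∈ (tightG q n).neighborSet (i, Sum.inr j) := by
        rw [SimpleGraph.mem_neighborSet, tightG_adj]; simp
      have hpos := (Set.ncard_pos (Set.toFinite _)).mpr ⟨_, this⟩
      omega
  · rintro ⟨i, x⟩ hy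
    rcases x with x | j
    · have hsub : (tightG q n).neighborSet (i, Sum.inl x) ⊆
          (fun j : Fin n => (i, (Sum.inr j : Unit ⊕ Fin n))) '' Set.univ := by
        rintro ⟨i', y⟩ hmem
        rw [SimpleGraph.mem_neighborSet, tightG_adj] at hmem
        obtain ⟨h1, h2⟩ := hmem
        simp only at h1; subst h1
        rcases y with y | j
        · simp at h2
        · exact ⟨j, by simp⟩
      calc ((tightG q n).neighborSet (i, Sum.inl x)).ncard
          ≤ _ := Set.ncard_le_ncard hsub (Set.toFinite _)
        _ = (Set.univ : Set (Fin n)).ncard := Set.ncard_image_of_injective _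
            (fun a b h => by simpa using h)
        _ = n := by simp [Set.ncard_univ]
    · simp at hy
  · have himg : {v : Fin q × (Unit ⊕ Fin n) | v.2.isRight} =
        (fun ij : Fin q × Fin n => (ij.1, (Sum.inr ij.2 : Unit ⊕ Fin n))) '' Set.univ := by
      ext ⟨i, x⟩
      rcases x with x | j <;> simp
    rw [himg, Set.ncard_image_of_injective _ ?_, Set.ncard_univ]
    · simp [Nat.card_eq_fintype_card, mul_comm]
    · rintro ⟨i, j⟩ ⟨i', j'⟩ h
      simpa [Prod.ext_iff] using h
end

section
/- There is a function f(n, N) such that for all integers n > 3 and N > 3, every connected graph G of diameter at most N that contains no induced K_{1,n} and no induced K̃_n^p for any p ≥ 1 satisfies def(G) ≤ f(n, N). -/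
open SimpleGraph

/- ------------------------------------------------------------------
   Auxiliary development for the proof
   ------------------------------------------------------------------ -/

set_option linter.unusedSectionVars false
set_option linter.unusedVariables false
set_option maxHeartbeats 1000000

variable {V : Type} [Fintype V] [DecidableEq V] {G : SimpleGraph V}

def IsMch (G : SimpleGraph V) (f : V → V) : Prop :=
  (∀ v, f (f v) = v) ∧ (∀ v, f v ≠ v → G.Adj v (f v))

noncomputable def covered (f : V → V) : Finset V :=
  Finset.univ.filter (fun v => f v ≠ v)

noncomputable def msize (f : V → V) : ℕ := (covered f).card

lemma mem_covered {f : V → V} {v : V} : v ∈ covered f ↔ f v ≠ v := by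
  simp [covered]

lemma isMch_id : IsMch G (fun v => v) := ⟨fun v => rfl, fun v h => absurd rfl h⟩

lemma bridge (f : V → V) (hf : IsMch G f) :
    ∃ M : G.Subgraph, M.IsMatching ∧ M.verts.ncard = msize f := by
  classical
  refine ⟨{ verts := (covered f : Set V), Adj := fun a b => a ≠ b ∧ f a = b,
            adj_sub := ?_, edge_vert := ?_, symm := ?_}, ?_, ?_⟩
  · rintro a b ⟨hab, hfa⟩
    subst hfa
    exact hf.2 a (Ne.symm hab)
  · rintro a b ⟨hab, hfa⟩
    exact Finset.mem_coe.mpr (mem_covered.mpr (by rw [hfa]; exact Ne.symm hab))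
  · refine ⟨?_⟩; rintro a b ⟨hab, hfa⟩
    exact ⟨Ne.symm hab, by rw [← hfa, hf.1 a]⟩
  · intro v hv
    have hfv : f v ≠ v := by
      have : v ∈ covered f := hv
      simpa [covered] using this
    refine ⟨f v, ⟨Ne.symm hfv, rfl⟩, ?_⟩
    rintro y ⟨hy, hfy⟩
    exact hfy.symm
  · simp [msize, Set.ncard_coe_finset]

noncomputable def exposedF (f : V → V) : Finset V :=
  Finset.univ.filter (fun v => f v = v)

lemma mem_exposedF {f : V → V} {v : V} : v ∈ exposedF f ↔ f v = v := by
  simp [exposedF]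

noncomputable def Phi (G : SimpleGraph V) (r : V) (f : V → V) : ℕ :=
  ∑ v ∈ exposedF f, G.dist r v

lemma split_sum (f : V → V) (s : Finset V) (F : V → ℕ) :
    ∑ v ∈ exposedF f, F v
      = (∑ v ∈ s, if f v = v then F v else 0) + ∑ v ∈ (exposedF f) \ s, F v := by
  classical
  rw [← Finset.sum_filter_add_sum_filter_not (exposedF f) (· ∈ s) F]
  congr 1
  · rw [← Finset.sum_filter]
    congr 1
    ext v
    simp only [Finset.mem_filter, mem_exposedF]
    tauto
  · congr 1
    ext v
    simp only [Finset.mem_filter, Finset.mem_sdiff, mem_exposedF]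

lemma split_card (f : V → V) (s : Finset V) :
    msize f = (∑ v ∈ s, if f v ≠ v then 1 else 0) + ((covered f) \ s).card := by
  classical
  rw [msize, ← Finset.card_filter_add_card_filter_not (s := covered f) (p := (· ∈ s))]
  congr 1
  · have : (covered f).filter (· ∈ s) = s.filter (fun v => f v ≠ v) := by
      ext v
      simp only [Finset.mem_filter, mem_covered]
      tauto
    rw [this, Finset.card_filter]
  · congr 1
    ext v
    simp only [Finset.mem_filter, Finset.mem_sdiff, mem_covered]

lemma diff_exposed {f g : V → V} {s : Finset V}
    (hsame : ∀ v, v ∉ s → (f v = v ↔ g v = v)) :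
    (exposedF f) \ s = (exposedF g) \ s := by
  ext v
  simp only [Finset.mem_sdiff, mem_exposedF]
  by_cases hv : v ∈ s
  · simp [hv]
  · simp [hv, hsame v hv]

lemma diff_covered {f g : V → V} {s : Finset V}
    (hsame : ∀ v, v ∉ s → (f v = v ↔ g v = v)) :
    (covered f) \ s = (covered g) \ s := by
  ext v
  simp only [Finset.mem_sdiff, mem_covered]
  by_cases hv : v ∈ s
  · simp [hv]
  · simp [hv, not_iff_not.mpr (hsame v hv)]
section Swaps

variable {f : V → V} {r : V}

/-- generic swap: `u` exposed adjacent to `a`, `f a = b`; rematch `u–a`, expose `b`.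
Under `Phi`-minimality this gives `dist r u ≤ dist r b`. -/
lemma swap_general (hf : IsMch G f)
    (hmin : ∀ g, IsMch G g → msize g = msize f → g r = r → Phi G r f ≤ Phi G r g)
    (u a b : V) (hu : f u = u) (hab : f a = b) (hne : a ≠ b) (hadj : G.Adj u a)
    (hr : f r = r) (hru : r ≠ u) :
    G.dist r u ≤ G.dist r b := by
  classical
  have hba : f b = a := by rw [← hab, hf.1]
  have hua : u ≠ a := by intro h; rw [h, hab] at hu; exact hne hu.symm
  have hub : u ≠ b := by intro h; rw [h, hba] at hu; exact hne hu
  have hra : r ≠ a := by intro h; rw [h, hab] at hr; exact hne hr.symm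
  have hrb : r ≠ b := by intro h; rw [h, hba] at hr; exact hne hr
  set g : V → V := fun v => if v = u then a else if v = a then u
      else if v = b then b else f v with hg
  have hgu : g u = a := by simp [hg]
  have hga : g a = u := by simp [hg, Ne.symm hua]
  have hgb : g b = b := by simp [hg, Ne.symm hub, Ne.symm hne]
  have hgother : ∀ v, v ≠ u → v ≠ a → v ≠ b → g v = f v := by
    intro v h1 h2 h3; simp [hg, h1, h2, h3]
  have hgmch : IsMch G g := by
    constructor
    · intro v
      by_cases h1 : v = u
      · rw [h1, hgu, hga]
      by_cases h2 : v = a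
      · rw [h2, hga, hgu]
      by_cases h3 : v = b
      · rw [h3, hgb, hgb]
      · rw [hgother v h1 h2 h3]
        have e1 : f v ≠ u := fun h => h1 (by rw [← hf.1 v, h, hu])
        have e2 : f v ≠ a := fun h => h3 (by rw [← hf.1 v, h, hab])
        have e3 : f v ≠ b := fun h => h2 (by rw [← hf.1 v, h, hba])
        rw [hgother _ e1 e2 e3, hf.1]
    · intro v hv
      by_cases h1 : v = u
      · subst h1; rw [hgu]; exact hadj
      by_cases h2 : v = a
      · subst h2; rw [hga]; exact hadj.symm
      by_cases h3 : v = b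
      · exact absurd (h3 ▸ hgb) (h3 ▸ hv)
      · rw [hgother v h1 h2 h3] at hv ⊢
        exact hf.2 v hv
  have hsame : ∀ v, v ∉ ({u, a, b} : Finset V) → (g v = v ↔ f v = v) := by
    intro v hv
    simp only [Finset.mem_insert, Finset.mem_singleton, not_or] at hv
    rw [hgother v hv.1 hv.2.1 hv.2.2]
  -- msize g = msize f
  have habne : f a ≠ a := by rw [hab]; exact hne.symm
  have hbbne : f b ≠ b := by rw [hba]; exact hne
  have hmem : u ∉ ({a, b} : Finset V) := by simp [hua, hub]
  have hmem2 : a ∉ ({b} : Finset V) := by simp [hne]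
  have hsz_g := split_card g ({u, a, b} : Finset V)
  have hsz_f := split_card f ({u, a, b} : Finset V)
  rw [Finset.sum_insert hmem, Finset.sum_insert hmem2, Finset.sum_singleton] at hsz_g hsz_f
  rw [if_pos (show g u ≠ u by rw [hgu]; exact Ne.symm hua), if_pos (show g a ≠ a by rw [hga]; exact hua),
    if_neg (fun h => h (hgb))] at hsz_g
  rw [if_neg (fun h => h hu), if_pos habne, if_pos hbbne] at hsz_f
  rw [diff_covered (f := g) (g := f) (fun v hv => hsame v hv)] at hsz_g
  have hmsz : msize g = msize f := by omega
  -- Phi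
  have hsum_g := split_sum g ({u, a, b} : Finset V) (fun v => G.dist r v)
  have hsum_f := split_sum f ({u, a, b} : Finset V) (fun v => G.dist r v)
  rw [Finset.sum_insert hmem, Finset.sum_insert hmem2, Finset.sum_singleton] at hsum_g hsum_f
  rw [if_neg (show ¬ g u = u by rw [hgu]; exact Ne.symm hua), if_neg (show ¬ g a = a by rw [hga]; exact hua),
    if_pos hgb] at hsum_g
  rw [if_pos hu, if_neg habne, if_neg hbbne] at hsum_f
  rw [diff_exposed (f := g) (g := f) (fun v hv => hsame v hv)] at hsum_g
  have hgr : g r = r := by rw [hgother r hru hra hrb, hr]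
  have hle := hmin g hgmch hmsz hgr
  rw [Phi, Phi, hsum_g, hsum_f] at hle
  omega

/-- two adjacent exposed vertices contradict maximality -/
lemma aug2 (hf : IsMch G f)
    (hmax : ∀ g, IsMch G g → msize g ≤ msize f)
    {u u' : V} (hu : f u = u) (hu' : f u' = u') (hadj : G.Adj u u') : False := by
  classical
  have hne : u ≠ u' := hadj.ne
  set g : V → V := fun v => if v = u then u' else if v = u' then u else f v with hg
  have hgu : g u = u' := by simp [hg]
  have hgu' : g u' = u := by simp [hg, Ne.symm hne]
  have hgother : ∀ v, v ≠ u → v ≠ u' → g v = f v := by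
    intro v h1 h2; simp [hg, h1, h2]
  have hgmch : IsMch G g := by
    constructor
    · intro v
      by_cases h1 : v = u
      · rw [h1, hgu, hgu']
      by_cases h2 : v = u'
      · rw [h2, hgu', hgu]
      · rw [hgother v h1 h2]
        have e1 : f v ≠ u := fun h => h1 (by rw [← hf.1 v, h, hu])
        have e2 : f v ≠ u' := fun h => h2 (by rw [← hf.1 v, h, hu'])
        rw [hgother _ e1 e2, hf.1]
    · intro v hv
      by_cases h1 : v = u
      · subst h1; rw [hgu]; exact hadj
      by_cases h2 : v = u'
      · subst h2; rw [hgu']; exact hadj.symm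
      · rw [hgother v h1 h2] at hv ⊢; exact hf.2 v hv
  have hsame : ∀ v, v ∉ ({u, u'} : Finset V) → (g v = v ↔ f v = v) := by
    intro v hv
    simp only [Finset.mem_insert, Finset.mem_singleton, not_or] at hv
    rw [hgother v hv.1 hv.2]
  have hmem : u ∉ ({u'} : Finset V) := by simp [hne]
  have hsz_g := split_card g ({u, u'} : Finset V)
  have hsz_f := split_card f ({u, u'} : Finset V)
  rw [Finset.sum_insert hmem, Finset.sum_singleton] at hsz_g hsz_f
  rw [if_pos (show g u ≠ u by rw [hgu]; exact Ne.symm hne), if_pos (show g u' ≠ u' by rw [hgu']; exact hne)] at hsz_g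
  rw [if_neg (fun h => h hu), if_neg (fun h => h hu')] at hsz_f
  rw [diff_covered (f := g) (g := f) (fun v hv => hsame v hv)] at hsz_g
  have := hmax g hgmch
  omega

end Swaps
section Augs

variable {f : V → V}

/-- augmenting path u–w'–c'–u' : contradiction with maximality -/
lemma aug3 (hf : IsMch G f)
    (hmax : ∀ g, IsMch G g → msize g ≤ msize f)
    {u u' c' w' : V} (hu : f u = u) (hu' : f u' = u') (huu' : u ≠ u')
    (hcw : f c' = w') (hne : c' ≠ w')
    (hadj1 : G.Adj u w') (hadj2 : G.Adj c' u') : False := by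
  classical
  have hwc : f w' = c' := by rw [← hcw, hf.1]
  have huc : u ≠ c' := by intro h; rw [h, hcw] at hu; exact hne hu.symm
  have huw : u ≠ w' := by intro h; rw [h, hwc] at hu; exact hne hu
  have hu'c : u' ≠ c' := by intro h; rw [h, hcw] at hu'; exact hne hu'.symm
  have hu'w : u' ≠ w' := by intro h; rw [h, hwc] at hu'; exact hne hu'
  set g : V → V := fun v => if v = u then w' else if v = w' then u
      else if v = c' then u' else if v = u' then c' else f v with hg
  have hgu : g u = w' := by simp [hg]
  have hgw : g w' = u := by simp [hg, Ne.symm huw]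
  have hgc : g c' = u' := by simp [hg, Ne.symm huc, hne]
  have hgu' : g u' = c' := by simp [hg, huu'.symm, hu'w, hu'c]
  have hgother : ∀ v, v ≠ u → v ≠ w' → v ≠ c' → v ≠ u' → g v = f v := by
    intro v h1 h2 h3 h4; simp [hg, h1, h2, h3, h4]
  have hgmch : IsMch G g := by
    constructor
    · intro v
      by_cases h1 : v = u
      · rw [h1, hgu, hgw]
      by_cases h2 : v = w'
      · rw [h2, hgw, hgu]
      by_cases h3 : v = c'
      · rw [h3, hgc, hgu']
      by_cases h4 : v = u'
      · rw [h4, hgu', hgc]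
      · rw [hgother v h1 h2 h3 h4]
        have e1 : f v ≠ u := fun h => h1 (by rw [← hf.1 v, h, hu])
        have e2 : f v ≠ w' := fun h => h3 (by rw [← hf.1 v, h, hwc])
        have e3 : f v ≠ c' := fun h => h2 (by rw [← hf.1 v, h, hcw])
        have e4 : f v ≠ u' := fun h => h4 (by rw [← hf.1 v, h, hu'])
        rw [hgother _ e1 e2 e3 e4, hf.1]
    · intro v hv
      by_cases h1 : v = u
      · subst h1; rw [hgu]; exact hadj1
      by_cases h2 : v = w'
      · subst h2; rw [hgw]; exact hadj1.symm
      by_cases h3 : v = c'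
      · subst h3; rw [hgc]; exact hadj2
      by_cases h4 : v = u'
      · subst h4; rw [hgu']; exact hadj2.symm
      · rw [hgother v h1 h2 h3 h4] at hv ⊢; exact hf.2 v hv
  have hsame : ∀ v, v ∉ ({u, u', c', w'} : Finset V) → (g v = v ↔ f v = v) := by
    intro v hv
    simp only [Finset.mem_insert, Finset.mem_singleton, not_or] at hv
    rw [hgother v hv.1 hv.2.2.2 hv.2.2.1 hv.2.1]
  have hm1 : u ∉ ({u', c', w'} : Finset V) := by simp [huu', huc, huw]
  have hm2 : u' ∉ ({c', w'} : Finset V) := by simp [hu'c, hu'w]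
  have hm3 : c' ∉ ({w'} : Finset V) := by simp [hne]
  have hsz_g := split_card g ({u, u', c', w'} : Finset V)
  have hsz_f := split_card f ({u, u', c', w'} : Finset V)
  rw [Finset.sum_insert hm1, Finset.sum_insert hm2, Finset.sum_insert hm3,
    Finset.sum_singleton] at hsz_g hsz_f
  rw [if_pos (show g u ≠ u by rw [hgu]; exact Ne.symm huw),
    if_pos (show g u' ≠ u' by rw [hgu']; exact Ne.symm hu'c),
    if_pos (show g c' ≠ c' by rw [hgc]; exact hu'c),
    if_pos (show g w' ≠ w' by rw [hgw]; exact huw)] at hsz_g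
  rw [if_neg (fun h => h hu), if_neg (fun h => h hu'),
    if_pos (show f c' ≠ c' by rw [hcw]; exact Ne.symm hne),
    if_pos (show f w' ≠ w' by rw [hwc]; exact hne)] at hsz_f
  rw [diff_covered (f := g) (g := f) (fun v hv => hsame v hv)] at hsz_g
  have := hmax g hgmch
  omega

/-- augmenting path u–c–w–w'–c'–u' : contradiction with maximality -/
lemma aug5 (hf : IsMch G f)
    (hmax : ∀ g, IsMch G g → msize g ≤ msize f)
    {u u' c w c' w' : V} (hu : f u = u) (hu' : f u' = u') (huu' : u ≠ u')
    (hcw : f c = w) (hne1 : c ≠ w) (hc'w' : f c' = w') (hne2 : c' ≠ w')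
    (hcc' : c ≠ c') (hcw' : c ≠ w')
    (hadj1 : G.Adj u c) (hadj2 : G.Adj w w') (hadj3 : G.Adj c' u') : False := by
  classical
  have hwc : f w = c := by rw [← hcw, hf.1]
  have hw'c' : f w' = c' := by rw [← hc'w', hf.1]
  have hwc' : w ≠ c' := by intro h; rw [h, hc'w'] at hwc; exact hcw' hwc.symm
  have hww' : w ≠ w' := by intro h; rw [h, hw'c'] at hwc; exact hcc' hwc.symm
  have huc : u ≠ c := by intro h; rw [h, hcw] at hu; exact hne1 hu.symm
  have huw : u ≠ w := by intro h; rw [h, hwc] at hu; exact hne1 hu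
  have huc' : u ≠ c' := by intro h; rw [h, hc'w'] at hu; exact hne2 hu.symm
  have huw' : u ≠ w' := by intro h; rw [h, hw'c'] at hu; exact hne2 hu
  have hu'c : u' ≠ c := by intro h; rw [h, hcw] at hu'; exact hne1 hu'.symm
  have hu'w : u' ≠ w := by intro h; rw [h, hwc] at hu'; exact hne1 hu'
  have hu'c' : u' ≠ c' := by intro h; rw [h, hc'w'] at hu'; exact hne2 hu'.symm
  have hu'w' : u' ≠ w' := by intro h; rw [h, hw'c'] at hu'; exact hne2 hu'
  set g : V → V := fun v => if v = u then c else if v = c then u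
      else if v = w then w' else if v = w' then w
      else if v = c' then u' else if v = u' then c' else f v with hg
  have hgu : g u = c := by simp [hg]
  have hgc : g c = u := by simp [hg, Ne.symm huc]
  have hgw : g w = w' := by simp [hg, Ne.symm huw, Ne.symm hne1]
  have hgw' : g w' = w := by simp [hg, Ne.symm huw', Ne.symm hcw', Ne.symm hww']
  have hgc' : g c' = u' := by simp [hg, Ne.symm huc', Ne.symm hcc', Ne.symm hwc', hne2]
  have hgu' : g u' = c' := by
    simp [hg, huu'.symm, hu'c, hu'w, hu'w', hu'c']
  have hgother : ∀ v, v ≠ u → v ≠ c → v ≠ w → v ≠ w' → v ≠ c' → v ≠ u' → g v = f v := by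
    intro v h1 h2 h3 h4 h5 h6; simp [hg, h1, h2, h3, h4, h5, h6]
  have hgmch : IsMch G g := by
    constructor
    · intro v
      by_cases h1 : v = u
      · rw [h1, hgu, hgc]
      by_cases h2 : v = c
      · rw [h2, hgc, hgu]
      by_cases h3 : v = w
      · rw [h3, hgw, hgw']
      by_cases h4 : v = w'
      · rw [h4, hgw', hgw]
      by_cases h5 : v = c'
      · rw [h5, hgc', hgu']
      by_cases h6 : v = u'
      · rw [h6, hgu', hgc']
      · rw [hgother v h1 h2 h3 h4 h5 h6]
        have e1 : f v ≠ u := fun h => h1 (by rw [← hf.1 v, h, hu])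
        have e2 : f v ≠ c := fun h => h3 (by rw [← hf.1 v, h, hcw])
        have e3 : f v ≠ w := fun h => h2 (by rw [← hf.1 v, h, hwc])
        have e4 : f v ≠ w' := fun h => h5 (by rw [← hf.1 v, h, hw'c'])
        have e5 : f v ≠ c' := fun h => h4 (by rw [← hf.1 v, h, hc'w'])
        have e6 : f v ≠ u' := fun h => h6 (by rw [← hf.1 v, h, hu'])
        rw [hgother _ e1 e2 e3 e4 e5 e6, hf.1]
    · intro v hv
      by_cases h1 : v = u
      · subst h1; rw [hgu]; exact hadj1
      by_cases h2 : v = c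
      · subst h2; rw [hgc]; exact hadj1.symm
      by_cases h3 : v = w
      · subst h3; rw [hgw]; exact hadj2
      by_cases h4 : v = w'
      · subst h4; rw [hgw']; exact hadj2.symm
      by_cases h5 : v = c'
      · subst h5; rw [hgc']; exact hadj3
      by_cases h6 : v = u'
      · subst h6; rw [hgu']; exact hadj3.symm
      · rw [hgother v h1 h2 h3 h4 h5 h6] at hv ⊢; exact hf.2 v hv
  have hsame : ∀ v, v ∉ ({u, u', c, w, c', w'} : Finset V) → (g v = v ↔ f v = v) := by
    intro v hv
    simp only [Finset.mem_insert, Finset.mem_singleton, not_or] at hv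
    rw [hgother v hv.1 hv.2.2.1 hv.2.2.2.1 hv.2.2.2.2.2 hv.2.2.2.2.1 hv.2.1]
  have hm1 : u ∉ ({u', c, w, c', w'} : Finset V) := by simp [huu', huc, huw, huc', huw']
  have hm2 : u' ∉ ({c, w, c', w'} : Finset V) := by simp [hu'c, hu'w, hu'c', hu'w']
  have hm3 : c ∉ ({w, c', w'} : Finset V) := by simp [hne1, hcc', hcw']
  have hm4 : w ∉ ({c', w'} : Finset V) := by simp [hwc', hww']
  have hm5 : c' ∉ ({w'} : Finset V) := by simp [hne2]
  have hsz_g := split_card g ({u, u', c, w, c', w'} : Finset V)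
  have hsz_f := split_card f ({u, u', c, w, c', w'} : Finset V)
  rw [Finset.sum_insert hm1, Finset.sum_insert hm2, Finset.sum_insert hm3,
    Finset.sum_insert hm4, Finset.sum_insert hm5, Finset.sum_singleton] at hsz_g hsz_f
  rw [if_pos (show g u ≠ u by rw [hgu]; exact Ne.symm huc),
    if_pos (show g u' ≠ u' by rw [hgu']; exact Ne.symm hu'c'),
    if_pos (show g c ≠ c by rw [hgc]; exact huc),
    if_pos (show g w ≠ w by rw [hgw]; exact Ne.symm hww'),
    if_pos (show g c' ≠ c' by rw [hgc']; exact hu'c'),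
    if_pos (show g w' ≠ w' by rw [hgw']; exact hww')] at hsz_g
  rw [if_neg (fun h => h hu), if_neg (fun h => h hu'),
    if_pos (show f c ≠ c by rw [hcw]; exact Ne.symm hne1),
    if_pos (show f w ≠ w by rw [hwc]; exact hne1),
    if_pos (show f c' ≠ c' by rw [hc'w']; exact Ne.symm hne2),
    if_pos (show f w' ≠ w' by rw [hw'c']; exact hne2)] at hsz_f
  rw [diff_covered (f := g) (g := f) (fun v hv => hsame v hv)] at hsz_g
  have := hmax g hgmch
  omega

end Augs
section Tools

/-- Ramsey numbers (crude) -/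
def ramN : ℕ → ℕ → ℕ
  | 0, _ => 0
  | _+1, 0 => 0
  | a+1, b+1 => ramN a (b+1) + ramN (a+1) b + 1

lemma my_ramsey {α : Type} [DecidableEq α] (R : α → α → Prop)
    (hsym : ∀ x y, R x y → R y x) :
    ∀ a b (s : Finset α), ramN a b ≤ s.card →
      (∃ t ⊆ s, t.card = a ∧ ∀ x ∈ t, ∀ y ∈ t, x ≠ y → R x y) ∨
      (∃ t ⊆ s, t.card = b ∧ ∀ x ∈ t, ∀ y ∈ t, x ≠ y → ¬ R x y) := by
  classical
  intro a
  induction a with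
  | zero =>
    intro b s _
    exact Or.inl ⟨∅, Finset.empty_subset s, Finset.card_empty, by simp⟩
  | succ a iha =>
    intro b
    induction b with
    | zero =>
      intro s _
      exact Or.inr ⟨∅, Finset.empty_subset s, Finset.card_empty, by simp⟩
    | succ b ihb =>
      intro s hs
      rw [ramN] at hs
      have hne : s.Nonempty := Finset.card_pos.mp (by omega)
      obtain ⟨v, hv⟩ := hne
      set s' := s.erase v with hs'
      have hcard : ramN a (b+1) + ramN (a+1) b ≤ s'.card := by
        rw [hs', Finset.card_erase_of_mem hv]; omega
      set A := s'.filter (fun x => R v x) with hA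
      set B := s'.filter (fun x => ¬ R v x) with hB
      have hAB : A.card + B.card = s'.card := Finset.card_filter_add_card_filter_not _
      have hcase : ramN a (b+1) ≤ A.card ∨ ramN (a+1) b ≤ B.card := by omega
      rcases hcase with hc | hc
      · rcases iha (b+1) A hc with ⟨t, hts, htc, htp⟩ | ⟨t, hts, htc, htp⟩
        · refine Or.inl ⟨insert v t, ?_, ?_, ?_⟩
          · intro x hx
            rcases Finset.mem_insert.mp hx with h | h
            · exact h ▸ hv
            · exact Finset.mem_of_mem_erase (Finset.mem_of_subset (hts.trans (Finset.filter_subset _ _)) h)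
          · rw [Finset.card_insert_of_notMem, htc]
            intro hvt
            have := Finset.mem_of_subset hts hvt
            rw [hA] at this
            exact (Finset.ne_of_mem_erase (Finset.mem_of_mem_filter v this)) rfl
          · intro x hx y hy hxy
            rcases Finset.mem_insert.mp hx with h | h <;>
              rcases Finset.mem_insert.mp hy with h' | h'
            · exact absurd (h.trans h'.symm) hxy
            · subst h
              have : y ∈ A := Finset.mem_of_subset hts h'
              exact (Finset.mem_filter.mp this).2
            · subst h'
              have : x ∈ A := Finset.mem_of_subset hts h
              exact hsym _ _ (Finset.mem_filter.mp this).2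
            · exact htp x h y h' hxy
        · exact Or.inr ⟨t, hts.trans ((Finset.filter_subset _ _).trans (Finset.erase_subset _ _)), htc, htp⟩
      · rcases ihb B hc with ⟨t, hts, htc, htp⟩ | ⟨t, hts, htc, htp⟩
        · exact Or.inl ⟨t, hts.trans ((Finset.filter_subset _ _).trans (Finset.erase_subset _ _)), htc, htp⟩
        · refine Or.inr ⟨insert v t, ?_, ?_, ?_⟩
          · intro x hx
            rcases Finset.mem_insert.mp hx with h | h
            · exact h ▸ hv
            · exact Finset.mem_of_mem_erase (Finset.mem_of_subset (hts.trans (Finset.filter_subset _ _)) h)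
          · rw [Finset.card_insert_of_notMem, htc]
            intro hvt
            have := Finset.mem_of_subset hts hvt
            rw [hB] at this
            exact (Finset.ne_of_mem_erase (Finset.mem_of_mem_filter v this)) rfl
          · intro x hx y hy hxy
            rcases Finset.mem_insert.mp hx with h | h <;>
              rcases Finset.mem_insert.mp hy with h' | h'
            · exact absurd (h.trans h'.symm) hxy
            · subst h
              have : y ∈ B := Finset.mem_of_subset hts h'
              exact (Finset.mem_filter.mp this).2
            · subst h'
              have hxB : x ∈ B := Finset.mem_of_subset hts h
              exact fun hr => (Finset.mem_filter.mp hxB).2 (hsym _ _ hr)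
            · exact htp x h y h' hxy

/-- prune a digraph with bounded out-degree to an independent set -/
lemma prune_aux {α : Type} [DecidableEq α] (R : α → α → Prop) [DecidableRel R] (D : ℕ) :
    ∀ n (s : Finset α), s.card ≤ n →
      (∀ v ∈ s, (s.filter (fun x => R v x)).card ≤ D) →
      ∃ t ⊆ s, (∀ x ∈ t, ∀ y ∈ t, x ≠ y → ¬ R x y ∧ ¬ R y x) ∧
        s.card ≤ (2*D+1) * t.card := by
  intro n
  induction n with
  | zero =>
    intro s hs _
    have : s = ∅ := Finset.card_eq_zero.mp (by omega)
    exact ⟨∅, by simp [this], by simp, by simp [this]⟩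
  | succ n ih =>
    intro s hs hout
    rcases Finset.eq_empty_or_nonempty s with rfl | ⟨v0, hv0⟩
    · exact ⟨∅, by simp, by simp, by simp⟩
    -- find vertex with in-degree ≤ D
    have hdouble : ∑ v ∈ s, (s.filter (fun x => R x v)).card
        = ∑ x ∈ s, (s.filter (fun v => R x v)).card := by
      simp only [Finset.card_filter]
      rw [Finset.sum_comm]
    have hsum : ∑ v ∈ s, (s.filter (fun x => R x v)).card ≤ D * s.card := by
      rw [hdouble]
      calc ∑ x ∈ s, (s.filter (fun v => R x v)).card ≤ ∑ _x ∈ s, D :=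
            Finset.sum_le_sum (fun x hx => hout x hx)
        _ = D * s.card := by rw [Finset.sum_const, smul_eq_mul, mul_comm]
    have hexv : ∃ v ∈ s, (s.filter (fun x => R x v)).card ≤ D := by
      by_contra hcon
      push_neg at hcon
      have : D * s.card + s.card ≤ ∑ v ∈ s, (s.filter (fun x => R x v)).card := by
        calc D * s.card + s.card = (D + 1) * s.card := by ring
          _ = ∑ _v ∈ s, (D+1) := by rw [Finset.sum_const, smul_eq_mul, mul_comm]
          _ ≤ _ := Finset.sum_le_sum (fun v hv => hcon v hv)
      have hpos : 0 < s.card := Finset.card_pos.mpr ⟨v0, hv0⟩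
      omega
    obtain ⟨v, hvs, hvin⟩ := hexv
    set B := insert v (s.filter (fun x => R v x ∨ R x v)) with hB
    have hBcard : B.card ≤ 2*D+1 := by
      have h1 : (s.filter (fun x => R v x ∨ R x v)).card ≤ 2*D := by
        have : s.filter (fun x => R v x ∨ R x v)
            ⊆ s.filter (fun x => R v x) ∪ s.filter (fun x => R x v) := by
          intro x hx
          rw [Finset.mem_filter] at hx
          rcases hx.2 with h | h
          · exact Finset.mem_union_left _ (Finset.mem_filter.mpr ⟨hx.1, h⟩)
          · exact Finset.mem_union_right _ (Finset.mem_filter.mpr ⟨hx.1, h⟩)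
        calc (s.filter (fun x => R v x ∨ R x v)).card
            ≤ (s.filter (fun x => R v x) ∪ s.filter (fun x => R x v)).card :=
              Finset.card_le_card this
          _ ≤ (s.filter (fun x => R v x)).card + (s.filter (fun x => R x v)).card :=
              Finset.card_union_le _ _
          _ ≤ D + D := Nat.add_le_add (hout v hvs) hvin
          _ = 2*D := by ring
      calc B.card ≤ (s.filter (fun x => R v x ∨ R x v)).card + 1 := Finset.card_insert_le _ _
        _ ≤ 2*D+1 := by omega
    set s2 := s \ B with hs2
    have hs2card : s2.card ≤ n := by
      have hvB : v ∈ B := Finset.mem_insert_self _ _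
      have : s2 ⊆ s.erase v := by
        intro x hx
        rw [hs2, Finset.mem_sdiff] at hx
        refine Finset.mem_erase.mpr ⟨?_, hx.1⟩
        intro hxv
        exact hx.2 (hxv ▸ hvB)
      calc s2.card ≤ (s.erase v).card := Finset.card_le_card this
        _ = s.card - 1 := Finset.card_erase_of_mem hvs
        _ ≤ n := by omega
    have hout2 : ∀ w ∈ s2, (s2.filter (fun x => R w x)).card ≤ D := by
      intro w hw
      calc (s2.filter (fun x => R w x)).card ≤ (s.filter (fun x => R w x)).card :=
            Finset.card_le_card (Finset.filter_subset_filter _ (Finset.sdiff_subset))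
        _ ≤ D := hout w (Finset.mem_sdiff.mp hw).1
    obtain ⟨t, hts, htind, htcard⟩ := ih s2 hs2card hout2
    refine ⟨insert v t, ?_, ?_, ?_⟩
    · intro x hx
      rcases Finset.mem_insert.mp hx with h | h
      · exact h ▸ hvs
      · exact (Finset.mem_sdiff.mp (Finset.mem_of_subset hts h)).1
    · intro x hx y hy hxy
      have key : ∀ z ∈ t, ¬ R v z ∧ ¬ R z v := by
        intro z hz
        have hzs2 := Finset.mem_of_subset hts hz
        rw [hs2, Finset.mem_sdiff] at hzs2
        have : z ∉ s.filter (fun x => R v x ∨ R x v) := by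
          intro hmem
          exact hzs2.2 (Finset.mem_insert_of_mem hmem)
        rw [Finset.mem_filter] at this
        push_neg at this
        exact this hzs2.1
      rcases Finset.mem_insert.mp hx with h | h <;>
        rcases Finset.mem_insert.mp hy with h' | h'
      · exact absurd (h.trans h'.symm) hxy
      · subst h; exact key y h'
      · subst h'; exact ⟨(key x h).2, (key x h).1⟩
      · exact htind x h y h' hxy
    · have hvt : v ∉ t := by
        intro hvt
        have := Finset.mem_of_subset hts hvt
        rw [hs2, Finset.mem_sdiff] at this
        exact this.2 (Finset.mem_insert_self _ _)
      rw [Finset.card_insert_of_notMem hvt]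
      have hsub : s ⊆ s2 ∪ B := by
        intro x hx
        by_cases hxB : x ∈ B
        · exact Finset.mem_union_right _ hxB
        · exact Finset.mem_union_left _ (Finset.mem_sdiff.mpr ⟨hx, hxB⟩)
      calc s.card ≤ (s2 ∪ B).card := Finset.card_le_card hsub
        _ ≤ s2.card + B.card := Finset.card_union_le _ _
        _ ≤ (2*D+1) * t.card + (2*D+1) := by omega
        _ = (2*D+1) * (t.card + 1) := by ring

lemma prune {α : Type} [DecidableEq α] (R : α → α → Prop) [DecidableRel R] (D : ℕ) (s : Finset α)
    (hout : ∀ v ∈ s, (s.filter (fun x => R v x)).card ≤ D) :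
    ∃ t ⊆ s, (∀ x ∈ t, ∀ y ∈ t, x ≠ y → ¬ R x y ∧ ¬ R y x) ∧
      s.card ≤ (2*D+1) * t.card :=
  prune_aux R D s.card s le_rfl hout

/-- prune to make a map injective, given bounded fibers -/
lemma fiber_prune {α β : Type} [DecidableEq α] [DecidableEq β] (g : α → β) (D : ℕ) :
    ∀ n (s : Finset α), s.card ≤ n →
      (∀ v ∈ s, (s.filter (fun x => g x = g v)).card ≤ D) →
      ∃ t ⊆ s, (∀ x ∈ t, ∀ y ∈ t, x ≠ y → g x ≠ g y) ∧ s.card ≤ D * t.card := by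
  classical
  intro n
  induction n with
  | zero =>
    intro s hs _
    have : s = ∅ := Finset.card_eq_zero.mp (by omega)
    exact ⟨∅, by simp [this], by simp, by simp [this]⟩
  | succ n ih =>
    intro s hs hfib
    rcases Finset.eq_empty_or_nonempty s with rfl | ⟨v, hv⟩
    · exact ⟨∅, by simp, by simp, by simp⟩
    set B := s.filter (fun x => g x = g v) with hB
    have hvB : v ∈ B := Finset.mem_filter.mpr ⟨hv, rfl⟩
    set s2 := s \ B with hs2
    have hs2card : s2.card ≤ n := by
      have : s2 ⊆ s.erase v := by
        intro x hx
        rw [hs2, Finset.mem_sdiff] at hx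
        exact Finset.mem_erase.mpr ⟨fun hxv => hx.2 (hxv ▸ hvB), hx.1⟩
      calc s2.card ≤ (s.erase v).card := Finset.card_le_card this
        _ = s.card - 1 := Finset.card_erase_of_mem hv
        _ ≤ n := by omega
    have hfib2 : ∀ w ∈ s2, (s2.filter (fun x => g x = g w)).card ≤ D := by
      intro w hw
      calc (s2.filter (fun x => g x = g w)).card ≤ (s.filter (fun x => g x = g w)).card :=
            Finset.card_le_card (Finset.filter_subset_filter _ (Finset.sdiff_subset))
        _ ≤ D := hfib w (Finset.mem_sdiff.mp hw).1
    obtain ⟨t, hts, htinj, htcard⟩ := ih s2 hs2card hfib2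
    have hvt : v ∉ t := by
      intro hvt
      have := Finset.mem_of_subset hts hvt
      rw [hs2, Finset.mem_sdiff] at this
      exact this.2 hvB
    have hDpos : 1 ≤ D := by
      have := hfib v hv
      have : 1 ≤ (s.filter (fun x => g x = g v)).card :=
        Finset.card_pos.mpr ⟨v, hvB⟩
      omega
    refine ⟨insert v t, ?_, ?_, ?_⟩
    · intro x hx
      rcases Finset.mem_insert.mp hx with h | h
      · exact h ▸ hv
      · exact (Finset.mem_sdiff.mp (Finset.mem_of_subset hts h)).1
    · intro x hx y hy hxy
      have key : ∀ z ∈ t, g z ≠ g v := by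
        intro z hz
        have hzs2 := Finset.mem_of_subset hts hz
        rw [hs2, Finset.mem_sdiff] at hzs2
        intro heq
        exact hzs2.2 (Finset.mem_filter.mpr ⟨hzs2.1, heq⟩)
      rcases Finset.mem_insert.mp hx with h | h <;>
        rcases Finset.mem_insert.mp hy with h' | h'
      · exact absurd (h.trans h'.symm) hxy
      · subst h; exact fun heq => key y h' heq.symm
      · subst h'; exact key x h
      · exact htinj x h y h' hxy
    · rw [Finset.card_insert_of_notMem hvt]
      have hsub : s ⊆ s2 ∪ B := by
        intro x hx
        by_cases hxB : x ∈ B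
        · exact Finset.mem_union_right _ hxB
        · exact Finset.mem_union_left _ (Finset.mem_sdiff.mpr ⟨hx, hxB⟩)
      calc s.card ≤ (s2 ∪ B).card := Finset.card_le_card hsub
        _ ≤ s2.card + B.card := Finset.card_union_le _ _
        _ ≤ D * t.card + D := by
            have := hfib v hv
            rw [← hB] at this
            omega
        _ = D * (t.card + 1) := by ring

end Tools

section Embeddings

lemma tgraph_adj_ll {p : ℕ} (a b : Fin p) :
    (Tgraph p).Adj (Sum.inl a) (Sum.inl b) ↔ ((a:ℕ)+1 = (b:ℕ) ∨ (b:ℕ)+1 = (a:ℕ)) := by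
  rw [Tgraph, SimpleGraph.fromRel_adj]
  constructor
  · rintro ⟨hne, h | h⟩
    · exact Or.inl h
    · exact Or.inr h
  · intro h
    refine ⟨?_, h⟩
    intro heq
    rw [Sum.inl.injEq] at heq
    subst heq
    omega

lemma tgraph_adj_lr {p : ℕ} (a : Fin p) (k : Fin 2) :
    (Tgraph p).Adj (Sum.inl a) (Sum.inr k) ↔ (a:ℕ) = p - 1 := by
  rw [Tgraph, SimpleGraph.fromRel_adj]
  simp

lemma tgraph_adj_rr {p : ℕ} (k k' : Fin 2) :
    ¬ (Tgraph p).Adj (Sum.inr k) (Sum.inr k') := by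
  rw [Tgraph, SimpleGraph.fromRel_adj]
  simp

lemma isTEnd_inl {p : ℕ} (a : Fin p) : isTEnd (Sum.inl a) ↔ (a:ℕ) = 0 := Iff.rfl

lemma isTEnd_inr {p : ℕ} (k : Fin 2) : ¬ isTEnd (Sum.inr k : Fin p ⊕ Fin 2) := fun h => h

lemma ktilde_adj {n p : ℕ} (i j : Fin n) (x y : Fin p ⊕ Fin 2) :
    (Ktilde n p).Adj (i,x) (j,y) ↔ ((i,x) ≠ (j,y)) ∧
      ((i = j ∧ (Tgraph p).Adj x y) ∨ (i ≠ j ∧ isTEnd x ∧ isTEnd y)) := by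
  rw [Ktilde, SimpleGraph.fromRel_adj]
  constructor
  · rintro ⟨hne, h | h⟩
    · refine ⟨hne, ?_⟩
      rcases h with ⟨h1, h2⟩ | ⟨h1, h2, h3⟩
      · exact Or.inl ⟨h1, h2⟩
      · exact Or.inr ⟨h1, h2, h3⟩
    · refine ⟨hne, ?_⟩
      rcases h with ⟨h1, h2⟩ | ⟨h1, h2, h3⟩
      · exact Or.inl ⟨h1.symm, h2.symm⟩
      · exact Or.inr ⟨Ne.symm h1, h3, h2⟩
  · rintro ⟨hne, h⟩
    exact ⟨hne, Or.inl h⟩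

variable {V : Type} [Fintype V] [DecidableEq V] {G : SimpleGraph V} {n : ℕ}

/-- a vertex with `n` pairwise nonadjacent neighbors gives an induced `K_{1,n}` -/
lemma star_embed (v : V) (x : Fin n → V) (hinj : Function.Injective x)
    (hadj : ∀ i, G.Adj v (x i)) (hnadj : ∀ i j, i ≠ j → ¬ G.Adj (x i) (x j)) :
    Nonempty (_root_.starGraph n ↪g G) := by
  have hvx : ∀ i, v ≠ x i := fun i h => G.irrefl (h ▸ hadj i)
  refine ⟨⟨⟨Sum.elim (fun _ => v) x, ?_⟩, ?_⟩⟩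
  · refine (show Function.Injective _ from ?_)
    rintro (a | a) (b | b) h
    · simp
    · exact absurd h (hvx b)
    · exact absurd h.symm (hvx a)
    · simp only [Sum.elim_inr] at h
      rw [hinj h]
  · rintro (a | a) (b | b)
    · simp [_root_.starGraph]
    · simpa [_root_.starGraph] using hadj b
    · simpa [_root_.starGraph] using (hadj a).symm
    · simp only [Sum.elim_inr, _root_.starGraph, completeBipartiteGraph_adj]
      constructor
      · intro h
        by_cases hab : a = b
        · subst hab; exact absurd h (G.irrefl)
        · exact absurd h (hnadj a b hab)
      · simp


/-- building an induced K̃ₙᵖ from branches: `A i` is the path of branch `i`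
(`A i 0` = clique vertex, `A i (p-1)` = fork center), `U i`, `W i` the fork leaves. -/
lemma ktilde_embed {p : ℕ} (hp : 1 ≤ p)
    (A : Fin n → Fin p → V) (U W : Fin n → V)
    (hAinj : ∀ i j a b, A i a = A j b → i = j ∧ a = b)
    (hUinj : ∀ i j, U i = U j → i = j)
    (hWinj : ∀ i j, W i = W j → i = j)
    (hUA : ∀ i j a, U i ≠ A j a)
    (hWA : ∀ i j a, W i ≠ A j a)
    (hUW : ∀ i j, U i ≠ W j)
    (hpath : ∀ i (a b : Fin p), (a:ℕ)+1 = (b:ℕ) → G.Adj (A i a) (A i b))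
    (hnopath : ∀ i (a b : Fin p), (a:ℕ)+1 ≠ (b:ℕ) → (b:ℕ)+1 ≠ (a:ℕ) →
      ¬ G.Adj (A i a) (A i b))
    (hcliq : ∀ i j (a b : Fin p), i ≠ j → (a:ℕ) = 0 → (b:ℕ) = 0 → G.Adj (A i a) (A j b))
    (hcross : ∀ i j (a b : Fin p), i ≠ j → ¬((a:ℕ) = 0 ∧ (b:ℕ) = 0) →
      ¬ G.Adj (A i a) (A j b))
    (hUadj : ∀ i (a : Fin p), (a:ℕ) = p - 1 → G.Adj (A i a) (U i))
    (hWadj : ∀ i (a : Fin p), (a:ℕ) = p - 1 → G.Adj (A i a) (W i))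
    (hUn : ∀ i j (a : Fin p), (i ≠ j ∨ (a:ℕ) ≠ p - 1) → ¬ G.Adj (U i) (A j a))
    (hWn : ∀ i j (a : Fin p), (i ≠ j ∨ (a:ℕ) ≠ p - 1) → ¬ G.Adj (W i) (A j a))
    (hUU : ∀ i j, i ≠ j → ¬ G.Adj (U i) (U j))
    (hWW : ∀ i j, i ≠ j → ¬ G.Adj (W i) (W j))
    (hUWn : ∀ i j, ¬ G.Adj (U i) (W j)) :
    Nonempty (Ktilde n p ↪g G) := by
  classical
  set m : Fin n × (Fin p ⊕ Fin 2) → V := fun q =>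
    match q with
    | (i, Sum.inl a) => A i a
    | (i, Sum.inr k) => if k = 0 then U i else W i
    with hm
  have hmval_l : ∀ i a, m (i, Sum.inl a) = A i a := fun i a => rfl
  have hmval_u : ∀ i, m (i, Sum.inr 0) = U i := fun i => rfl
  have hmval_w : ∀ i, m (i, Sum.inr 1) = W i := fun i => rfl
  have hk2 : ∀ (k : Fin 2), k = 0 ∨ k = 1 := by decide
  refine ⟨⟨⟨m, ?_⟩, ?_⟩⟩
  · refine (show Function.Injective _ from ?_)
    rintro ⟨i, x | k⟩ ⟨j, y | k'⟩ h
    · obtain ⟨h1, h2⟩ := hAinj i j x y h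
      rw [h1, h2]
    · rcases hk2 k' with rfl | rfl
      · rw [hmval_l, hmval_u] at h; exact absurd h.symm (hUA j i x)
      · rw [hmval_l, hmval_w] at h; exact absurd h.symm (hWA j i x)
    · rcases hk2 k with rfl | rfl
      · rw [hmval_l, hmval_u] at h; exact absurd h (hUA i j y)
      · rw [hmval_l, hmval_w] at h; exact absurd h (hWA i j y)
    · rcases hk2 k with rfl | rfl <;> rcases hk2 k' with rfl | rfl
      · rw [hmval_u, hmval_u] at h; rw [hUinj i j h]
      · rw [hmval_u, hmval_w] at h; exact absurd h (hUW i j)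
      · rw [hmval_w, hmval_u] at h; exact absurd h.symm (hUW j i)
      · rw [hmval_w, hmval_w] at h; rw [hWinj i j h]
  · rintro ⟨i, x | k⟩ ⟨j, y | k'⟩ <;> simp only [Function.Embedding.coeFn_mk]
    · -- path-path
      rw [hmval_l, hmval_l, ktilde_adj]
      constructor
      · intro hadj
        by_cases hij : i = j
        · subst hij
          have hxy : x ≠ y := by
            intro h; subst h; exact G.irrefl hadj
          have hcons : (x:ℕ)+1 = (y:ℕ) ∨ (y:ℕ)+1 = (x:ℕ) := by
            by_contra hc
            push_neg at hc
            exact hnopath i x y hc.1 hc.2 hadj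
          refine ⟨by simp [hxy], Or.inl ⟨rfl, (tgraph_adj_ll x y).mpr hcons⟩⟩
        · have hz : (x:ℕ) = 0 ∧ (y:ℕ) = 0 := by
            by_contra hc
            exact hcross i j x y hij hc hadj
          exact ⟨by simp [hij], Or.inr ⟨hij, hz.1, hz.2⟩⟩
      · rintro ⟨hne, ⟨rfl, hT⟩ | ⟨hij, hx, hy⟩⟩
        · rcases (tgraph_adj_ll x y).mp hT with h | h
          · exact hpath i x y h
          · exact (hpath i y x h).symm
        · exact hcliq i j x y hij hx hy
    · -- path-leaf
      rw [ktilde_adj]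
      have hrhs : ((i, Sum.inl x) ≠ (j, Sum.inr k')) := by simp
      rcases hk2 k' with rfl | rfl
      · rw [hmval_l, hmval_u]
        constructor
        · intro hadj
          have : ¬ (j ≠ i ∨ (x:ℕ) ≠ p - 1) := fun hc => hUn j i x hc hadj.symm
          push_neg at this
          refine ⟨hrhs, Or.inl ⟨this.1.symm, ?_⟩⟩
          exact (tgraph_adj_lr x 0).mpr this.2
        · rintro ⟨-, ⟨rfl, hT⟩ | ⟨hij, hx, hy⟩⟩
          · exact hUadj i x ((tgraph_adj_lr x 0).mp hT)
          · exact absurd hy (isTEnd_inr 0)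
      · rw [hmval_l, hmval_w]
        constructor
        · intro hadj
          have : ¬ (j ≠ i ∨ (x:ℕ) ≠ p - 1) := fun hc => hWn j i x hc hadj.symm
          push_neg at this
          refine ⟨hrhs, Or.inl ⟨this.1.symm, ?_⟩⟩
          exact (tgraph_adj_lr x 1).mpr this.2
        · rintro ⟨-, ⟨rfl, hT⟩ | ⟨hij, hx, hy⟩⟩
          · exact hWadj i x ((tgraph_adj_lr x 1).mp hT)
          · exact absurd hy (isTEnd_inr 1)
    · -- leaf-path
      rw [ktilde_adj]
      have hrhs : ((i, Sum.inr k) ≠ (j, Sum.inl y)) := by simp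
      rcases hk2 k with rfl | rfl
      · rw [hmval_u, hmval_l]
        constructor
        · intro hadj
          have : ¬ (i ≠ j ∨ (y:ℕ) ≠ p - 1) := fun hc => hUn i j y hc hadj
          push_neg at this
          refine ⟨hrhs, Or.inl ⟨this.1, ?_⟩⟩
          exact ((tgraph_adj_lr y 0).mpr this.2).symm
        · rintro ⟨-, ⟨rfl, hT⟩ | ⟨hij, hx, hy⟩⟩
          · exact (hUadj i y ((tgraph_adj_lr y 0).mp hT.symm)).symm
          · exact absurd hx (isTEnd_inr 0)
      · rw [hmval_w, hmval_l]
        constructor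
        · intro hadj
          have : ¬ (i ≠ j ∨ (y:ℕ) ≠ p - 1) := fun hc => hWn i j y hc hadj
          push_neg at this
          refine ⟨hrhs, Or.inl ⟨this.1, ?_⟩⟩
          exact ((tgraph_adj_lr y 1).mpr this.2).symm
        · rintro ⟨-, ⟨rfl, hT⟩ | ⟨hij, hx, hy⟩⟩
          · exact (hWadj i y ((tgraph_adj_lr y 1).mp hT.symm)).symm
          · exact absurd hx (isTEnd_inr 1)
    · -- leaf-leaf
      rw [ktilde_adj]
      constructor
      · intro hadj
        exfalso
        rcases hk2 k with rfl | rfl <;> rcases hk2 k' with rfl | rfl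
        · rw [hmval_u, hmval_u] at hadj
          by_cases hij : i = j
          · subst hij; exact G.irrefl hadj
          · exact hUU i j hij hadj
        · rw [hmval_u, hmval_w] at hadj
          exact hUWn i j hadj
        · rw [hmval_w, hmval_u] at hadj
          exact hUWn j i hadj.symm
        · rw [hmval_w, hmval_w] at hadj
          by_cases hij : i = j
          · subst hij; exact G.irrefl hadj
          · exact hWW i j hij hadj
      · rintro ⟨hne, ⟨rfl, hT⟩ | ⟨hij, hx, hy⟩⟩
        · exact absurd hT (tgraph_adj_rr k k')
        · exact absurd hx (isTEnd_inr k)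

end Embeddings


section Dist

variable {V : Type} [Fintype V] [DecidableEq V] {G : SimpleGraph V}

lemma adj_dist_one {x y : V} (h : G.Adj x y) : G.dist x y ≤ 1 := by
  have := SimpleGraph.dist_le (SimpleGraph.Walk.cons h SimpleGraph.Walk.nil)
  simpa using this

lemma adj_dist_le (hconn : G.Connected) (r : V) {x y : V} (h : G.Adj x y) :
    G.dist r x ≤ G.dist r y + 1 := by
  calc G.dist r x ≤ G.dist r y + G.dist y x := hconn.dist_triangle
    _ ≤ G.dist r y + 1 := by
        have := adj_dist_one h.symm
        omega

lemma not_adj_of_dist_gap (hconn : G.Connected) (r : V) {x y : V}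
    (h : G.dist r x + 2 ≤ G.dist r y) : ¬ G.Adj x y := by
  intro hadj
  have := adj_dist_le hconn r hadj.symm
  omega

lemma dist_getVert_le_front (hconn : G.Connected) {u r : V} (p : G.Walk u r) :
    ∀ a, G.dist u (p.getVert a) ≤ a := by
  intro a
  induction a with
  | zero => simp [SimpleGraph.Walk.getVert_zero, SimpleGraph.dist_self]
  | succ a ih =>
    by_cases ha : a < p.length
    · have hadj := p.adj_getVert_succ ha
      calc G.dist u (p.getVert (a+1))
          ≤ G.dist u (p.getVert a) + G.dist (p.getVert a) (p.getVert (a+1)) :=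
            hconn.dist_triangle
        _ ≤ a + 1 := by
            have h1 := adj_dist_one hadj
            omega
    · push_neg at ha
      rw [p.getVert_of_length_le (by omega : p.length ≤ a+1)]
      have := SimpleGraph.dist_le p
      omega

lemma dist_getVert_le_back (hconn : G.Connected) {u r : V} (p : G.Walk u r) :
    ∀ k a, a + k = p.length → G.dist (p.getVert a) r ≤ k := by
  intro k
  induction k with
  | zero =>
    intro a ha
    have : p.getVert a = r := by
      rw [show a = p.length by omega]
      exact p.getVert_length
    rw [this]
    simp [SimpleGraph.dist_self]
  | succ k ih =>
    intro a ha
    have hlt : a < p.length := by omega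
    have hadj := p.adj_getVert_succ hlt
    calc G.dist (p.getVert a) r
        ≤ G.dist (p.getVert a) (p.getVert (a+1)) + G.dist (p.getVert (a+1)) r :=
          hconn.dist_triangle
      _ ≤ 1 + k := by
          have h1 := adj_dist_one hadj
          have h2 := ih (a+1) (by omega)
          omega
      _ = k + 1 := by omega

/-- on a shortest walk from `u` to `r`, `dist r (getVert a) = dist r u - a`. -/
lemma dist_getVert_eq (hconn : G.Connected) {u r : V} (p : G.Walk u r)
    (hlen : p.length = G.dist u r) {a : ℕ} (ha : a ≤ p.length) :
    G.dist r (p.getVert a) = G.dist u r - a := by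
  have h1 := dist_getVert_le_front hconn p a
  have h2 := dist_getVert_le_back hconn p (p.length - a) a (by omega)
  have h3 : G.dist u r ≤ G.dist u (p.getVert a) + G.dist (p.getVert a) r :=
    hconn.dist_triangle
  have h4 : G.dist r (p.getVert a) = G.dist (p.getVert a) r := SimpleGraph.dist_comm ..
  omega

end Dist


section Helpers

lemma enum_finset {α : Type} [DecidableEq α] (t : Finset α) {k : ℕ} (h : t.card = k) :
    ∃ e : Fin k → α, Function.Injective e ∧ ∀ i, e i ∈ t := by
  refine ⟨fun i => (t.equivFin.symm (Fin.cast h.symm i) : t), ?_, ?_⟩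
  · intro i j hij
    have := t.equivFin.symm.injective (Subtype.ext hij)
    simpa [Fin.ext_iff] using congrArg Fin.val this
  · intro i
    exact (t.equivFin.symm (Fin.cast h.symm i)).2

variable {V : Type} [Fintype V] [DecidableEq V] {G : SimpleGraph V} {n : ℕ}

lemma star_bound (hstar : ¬ Nonempty (_root_.starGraph n ↪g G)) (v : V) (s : Finset V)
    (hadj : ∀ x ∈ s, G.Adj v x) (hind : ∀ x ∈ s, ∀ y ∈ s, x ≠ y → ¬ G.Adj x y) :
    s.card ≤ n - 1 := by
  by_contra hcon
  have hn : n ≤ s.card := by omega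
  obtain ⟨t, hts, htc⟩ := Finset.exists_subset_card_eq hn
  obtain ⟨e, heinj, hemem⟩ := enum_finset t htc
  exact hstar (star_embed v e heinj
    (fun i => hadj _ (hts (hemem i)))
    (fun i j hij => hind _ (hts (hemem i)) _ (hts (hemem j)) (fun h => hij (heinj h))))

lemma ramN_succ_succ (a b : ℕ) :
    ramN (a+1) (b+1) = ramN a (b+1) + ramN (a+1) b + 1 := by
  simp [ramN]

lemma ramN_mono_step : ∀ a b, ramN a b ≤ ramN a (b+1) := by
  intro a
  induction a with
  | zero => intro b; simp [ramN]
  | succ a iha =>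
    intro b
    induction b with
    | zero => simp [ramN]
    | succ b ihb =>
      show ramN (a+1) (b+1) ≤ ramN (a+1) (b+2)
      rw [ramN_succ_succ, ramN_succ_succ a (b+1)]
      have h1 := iha (b+1)
      have h2 : ramN a (b+1+1) = ramN a (b+2) := rfl
      omega

lemma ramN_mono {a b b' : ℕ} (h : b ≤ b') : ramN a b ≤ ramN a b' := by
  induction b' with
  | zero => simpa [Nat.le_zero.mp h]
  | succ b' ih =>
    rcases Nat.lt_or_ge b (b'+1) with hlt | hge
    · exact (ih (by omega)).trans (ramN_mono_step a b')
    · have : b = b' + 1 := by omega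
      rw [this]

lemma ramN_le_self : ∀ a b, b ≤ ramN (a+1) b := by
  intro a b
  induction b with
  | zero => simp
  | succ b ih =>
    rw [ramN_succ_succ]
    omega

end Helpers

/-- required family size with `t` levels remaining -/
def req (n : ℕ) : ℕ → ℕ
  | 0 => n
  | t+1 => (n+1) * ((2*n+1) * (ramN n (req n t) + 1) + 1) + 1

lemma ramN_le_self' (a b : ℕ) (ha : 1 ≤ a) : b ≤ ramN a b := by
  obtain ⟨m, rfl⟩ : ∃ m, a = m+1 := ⟨a-1, by omega⟩
  exact ramN_le_self m b

lemma req_mono_step (n : ℕ) (hn : 1 ≤ n) (t : ℕ) : req n t ≤ req n (t+1) := by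
  rw [show req n (t+1) = (n+1) * ((2*n+1) * (ramN n (req n t) + 1) + 1) + 1 from rfl]
  have h1 := ramN_le_self' n (req n t) hn
  set R := ramN n (req n t) with hR
  have a1 : R + 1 ≤ (2*n+1) * (R+1) := Nat.le_mul_of_pos_left _ (by omega)
  have a2 : (2*n+1) * (R+1) + 1 ≤ (n+1) * ((2*n+1) * (R+1) + 1) :=
    Nat.le_mul_of_pos_left _ (by omega)
  omega

lemma req_mono (n : ℕ) (hn : 1 ≤ n) {t t' : ℕ} (h : t ≤ t') : req n t ≤ req n t' := by
  induction t' with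
  | zero => simpa [Nat.le_zero.mp h]
  | succ t' ih =>
    rcases Nat.lt_or_ge t (t'+1) with hlt | hge
    · exact (ih (by omega)).trans (req_mono_step n hn t')
    · have : t = t' + 1 := by omega
      rw [this]

/-- the bound function -/
def fval (n N : ℕ) : ℕ :=
  (N+1) * ((n+1) * ((4*n+1) * (ramN n (req n N) + 1) + 1) + 1) + N + n + 10


section MainInduction

variable {V : Type} [Fintype V] [DecidableEq V] {G : SimpleGraph V} {n : ℕ}

lemma level_induction
    (hn : 3 < n)
    (hstar : ¬ Nonempty (_root_.starGraph n ↪g G))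
    (hkt : ∀ p : ℕ, 1 ≤ p → ¬ Nonempty (Ktilde n p ↪g G))
    (hconn : G.Connected)
    (ustar : V) (ℓ : ℕ) (hl2 : 2 ≤ ℓ)
    (y : V → ℕ → V) (c w : V → V) (I1 : Finset V)
    (hyD : ∀ u ∈ I1, ∀ a, a ≤ ℓ → G.dist ustar (y u a) = ℓ - a)
    (hyadj : ∀ u ∈ I1, ∀ a, a < ℓ → G.Adj (y u a) (y u (a+1)))
    (hylast : ∀ u ∈ I1, y u ℓ = ustar)
    (hy0 : ∀ u ∈ I1, y u 0 = u)
    (hc : ∀ u ∈ I1, c u = y u 1)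
    (hwD : ∀ u ∈ I1, ℓ ≤ G.dist ustar (w u))
    (hwadj : ∀ u ∈ I1, G.Adj (c u) (w u))
    (hwinj : ∀ u ∈ I1, ∀ u' ∈ I1, w u = w u' → u = u')
    (hwne : ∀ u ∈ I1, ∀ u' ∈ I1, u ≠ w u')
    (hnuw : ∀ u ∈ I1, ¬ G.Adj u (w u))
    (huexp : ∀ u ∈ I1, ∀ u' ∈ I1, u ≠ u' → ¬ G.Adj u u')
    (hX2 : ∀ u ∈ I1, ∀ u' ∈ I1, u ≠ u' → ¬ G.Adj u (w u'))
    (hX3 : ∀ u ∈ I1, ∀ u' ∈ I1, u ≠ u' → ¬ G.Adj (w u) (w u'))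
    (hP1b : ∀ u ∈ I1, ∀ u' ∈ I1, u ≠ u' → ¬ G.Adj (w u) (c u')) :
    ∀ t s (I : Finset V), I ⊆ I1 → 1 ≤ s → s + 1 + t = ℓ →
    (∀ u ∈ I, ∀ u' ∈ I, u ≠ u' → y u s ≠ y u' s) →
    (∀ u ∈ I, ∀ u' ∈ I, u ≠ u' → ∀ a b, a ≤ s → b ≤ s → ¬ G.Adj (y u a) (y u' b)) →
    req n t ≤ I.card → False := by
  classical
  -- derived facts
  have hDy0 : ∀ u ∈ I1, G.dist ustar u = ℓ := by
    intro u hu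
    have := hyD u hu 0 (by omega)
    rwa [hy0 u hu, Nat.sub_zero] at this
  have hDw_gap : ∀ u ∈ I1, ∀ u' ∈ I1, ∀ a, 2 ≤ a → a ≤ ℓ → ¬ G.Adj (w u) (y u' a) := by
    intro u hu u' hu' a ha2 hal
    have h1 := hwD u hu
    have h2 := hyD u' hu' a hal
    exact fun hadj => not_adj_of_dist_gap hconn ustar
      (by omega : G.dist ustar (y u' a) + 2 ≤ G.dist ustar (w u)) hadj.symm
  have hDu_gap : ∀ u ∈ I1, ∀ u' ∈ I1, ∀ a, 2 ≤ a → a ≤ ℓ → ¬ G.Adj u (y u' a) := by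
    intro u hu u' hu' a ha2 hal
    have h1 := hDy0 u hu
    have h2 := hyD u' hu' a hal
    exact fun hadj => not_adj_of_dist_gap hconn ustar
      (by omega : G.dist ustar (y u' a) + 2 ≤ G.dist ustar u) hadj.symm
  have hy_gap : ∀ u ∈ I1, ∀ u' ∈ I1, ∀ a b, a + 2 ≤ b → b ≤ ℓ →
      ¬ G.Adj (y u a) (y u' b) := by
    intro u hu u' hu' a b hab hbl
    have h1 := hyD u hu a (by omega)
    have h2 := hyD u' hu' b hbl
    exact fun hadj => not_adj_of_dist_gap hconn ustar
      (by omega : G.dist ustar (y u' b) + 2 ≤ G.dist ustar (y u a)) hadj.symm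
  have hylevel : ∀ u ∈ I1, ∀ u' ∈ I1, ∀ a b, a ≤ ℓ → b ≤ ℓ → y u a = y u' b → a = b := by
    intro u hu u' hu' a b hal hbl heq
    have h1 := hyD u hu a hal
    have h2 := hyD u' hu' b hbl
    rw [heq] at h1
    omega
  -- the induction
  intro t
  induction t with
  | zero =>
    intro s I hI hs1 hsl hQ1 hQ2 hcard
    -- final: frontier adjacent to ustar, K_{1,n}
    have hs : s = ℓ - 1 := by omega
    set s0 := I.image (fun u => y u s) with hs0
    have hs0card : s0.card = I.card := by
      rw [hs0]
      apply Finset.card_image_of_injOn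
      intro u hu u' hu' heq
      by_contra hne
      exact hQ1 u hu u' hu' hne heq
    have hs0adj : ∀ x ∈ s0, G.Adj ustar x := by
      intro x hx
      rw [hs0, Finset.mem_image] at hx
      obtain ⟨u, hu, rfl⟩ := hx
      have h1 := hyadj u (hI hu) s (by omega)
      have h2 := hylast u (hI hu)
      rw [show s + 1 = ℓ by omega, h2] at h1
      exact h1.symm
    have hs0ind : ∀ x ∈ s0, ∀ z ∈ s0, x ≠ z → ¬ G.Adj x z := by
      intro x hx z hz hxz
      rw [hs0, Finset.mem_image] at hx hz
      obtain ⟨u, hu, rfl⟩ := hx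
      obtain ⟨u', hu', rfl⟩ := hz
      have hne : u ≠ u' := fun h => hxz (by rw [h])
      exact hQ2 u hu u' hu' hne s s le_rfl le_rfl
    have := star_bound hstar ustar s0 hs0adj hs0ind
    have hreq : req n 0 = n := rfl
    omega
  | succ t ih =>
    intro s I hI hs1 hsl hQ1 hQ2 hcard
    have hsl1 : s + 1 ≤ ℓ - 1 := by omega
    -- (1) fiber prune on the next level
    have hfib : ∀ v ∈ I, (I.filter (fun x => y x (s+1) = y v (s+1))).card ≤ n - 1 := by
      intro v hv
      set fib := I.filter (fun x => y x (s+1) = y v (s+1)) with hfibdef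
      set z := y v (s+1) with hz
      set img := fib.image (fun u => y u s) with himg
      have himgcard : img.card = fib.card := by
        rw [himg]
        apply Finset.card_image_of_injOn
        intro a ha b hb heq
        by_contra hne
        exact hQ1 a (Finset.mem_of_mem_filter a ha) b (Finset.mem_of_mem_filter b hb) hne heq
      have h1 : ∀ x ∈ img, G.Adj z x := by
        intro x hx
        rw [himg, Finset.mem_image] at hx
        obtain ⟨u, hu, rfl⟩ := hx
        have hadj := hyadj u (hI (Finset.mem_of_mem_filter u hu)) s (by omega)
        have : y u (s+1) = z := (Finset.mem_filter.mp hu).2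
        rw [this] at hadj
        exact hadj.symm
      have h2 : ∀ x ∈ img, ∀ x' ∈ img, x ≠ x' → ¬ G.Adj x x' := by
        intro x hx x' hx' hxx'
        rw [himg, Finset.mem_image] at hx hx'
        obtain ⟨u, hu, rfl⟩ := hx
        obtain ⟨u', hu', rfl⟩ := hx'
        have hne : u ≠ u' := fun h => hxx' (by rw [h])
        exact hQ2 u (Finset.mem_of_mem_filter u hu) u' (Finset.mem_of_mem_filter u' hu')
          hne s s le_rfl le_rfl
      have := star_bound hstar z img h1 h2
      omega
    obtain ⟨I2, hI2sub, hI2inj, hI2card⟩ :=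
      fiber_prune (fun u => y u (s+1)) (n-1) I.card I le_rfl hfib
    -- (2) prune cross edges (s+1, s)
    haveI : DecidableRel (fun u u' => G.Adj (y u (s+1)) (y u' s)) := fun _ _ => Classical.dec _
    have hout : ∀ v ∈ I2, (I2.filter (fun x => G.Adj (y v (s+1)) (y x s))).card ≤ n - 1 := by
      intro v hv
      set fib := I2.filter (fun x => G.Adj (y v (s+1)) (y x s)) with hfibdef
      set z := y v (s+1) with hz
      set img := fib.image (fun u => y u s) with himg
      have himgcard : img.card = fib.card := by
        rw [himg]
        apply Finset.card_image_of_injOn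
        intro a ha b hb heq
        by_contra hne
        exact hQ1 a (hI2sub (Finset.mem_of_mem_filter a ha))
          b (hI2sub (Finset.mem_of_mem_filter b hb)) hne heq
      have h1 : ∀ x ∈ img, G.Adj z x := by
        intro x hx
        rw [himg, Finset.mem_image] at hx
        obtain ⟨u, hu, rfl⟩ := hx
        exact (Finset.mem_filter.mp hu).2
      have h2 : ∀ x ∈ img, ∀ x' ∈ img, x ≠ x' → ¬ G.Adj x x' := by
        intro x hx x' hx' hxx'
        rw [himg, Finset.mem_image] at hx hx'
        obtain ⟨u, hu, rfl⟩ := hx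
        obtain ⟨u', hu', rfl⟩ := hx'
        have hne : u ≠ u' := fun h => hxx' (by rw [h])
        exact hQ2 u (hI2sub (Finset.mem_of_mem_filter u hu))
          u' (hI2sub (Finset.mem_of_mem_filter u' hu')) hne s s le_rfl le_rfl
      have := star_bound hstar z img h1 h2
      omega
    obtain ⟨I3, hI3sub, hI3ind, hI3card⟩ :=
      prune (fun u u' => G.Adj (y u (s+1)) (y u' s)) (n-1) I2 hout
    -- (3) Ramsey on the new frontier
    have hI3big : ramN n (req n t) ≤ I3.card := by
      have h1 : req n (t+1) ≤ I.card := hcard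
      rw [show req n (t+1) = (n+1) * ((2*n+1) * (ramN n (req n t) + 1) + 1) + 1 from rfl] at h1
      set R := ramN n (req n t)
      have e1 : (2*n+1) * (R + 1) + 1 ≤ I2.card := by
        by_contra hcon
        push_neg at hcon
        have h3 : (n-1) * I2.card ≤ (n-1) * ((2*n+1) * (R+1)) := by
          apply Nat.mul_le_mul_left
          omega
        have h4 : (n-1) * ((2*n+1) * (R+1)) ≤ (n+1) * ((2*n+1) * (R+1)) := by
          apply Nat.mul_le_mul_right
          omega
        have h5 : (n+1) * ((2*n+1) * (R+1) + 1) = (n+1) * ((2*n+1) * (R+1)) + (n+1) := by ring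
        omega
      by_contra hcon
      push_neg at hcon
      have h3 : (2*(n-1)+1) * I3.card ≤ (2*(n-1)+1) * R := by
        apply Nat.mul_le_mul_left
        omega
      have h4 : (2*(n-1)+1) * R ≤ (2*n+1) * R := by
        apply Nat.mul_le_mul_right
        omega
      have h5 : (2*n+1) * (R+1) = (2*n+1) * R + (2*n+1) := by ring
      omega
    rcases my_ramsey (fun u u' => G.Adj (y u (s+1)) (y u' (s+1)))
        (fun x y h => h.symm) n (req n t) I3 hI3big with
      ⟨T, hTsub, hTcard, hTcliq⟩ | ⟨T, hTsub, hTcard, hTind⟩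
    · -- CLIQUE case: build K̃ₙ^(s+1)
      exfalso
      obtain ⟨e, heinj, hemem⟩ := enum_finset T hTcard
      have heI1 : ∀ i, e i ∈ I1 := fun i => hI (hI2sub (hI3sub (hTsub (hemem i))))
      have heI : ∀ i, e i ∈ I := fun i => hI2sub (hI3sub (hTsub (hemem i)))
      have heI2 : ∀ i, e i ∈ I2 := fun i => hI3sub (hTsub (hemem i))
      have heI3 : ∀ i, e i ∈ I3 := fun i => hTsub (hemem i)
      set p := s + 1 with hp
      -- level of index a : Fin p is  p - a ∈ [1, p]
      set A : Fin n → Fin p → V := fun i a => y (e i) (p - (a:ℕ)) with hA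
      set U : Fin n → V := fun i => e i with hU
      set W : Fin n → V := fun i => w (e i) with hW
      have hlev : ∀ a : Fin p, 1 ≤ p - (a:ℕ) ∧ p - (a:ℕ) ≤ p := by
        intro a
        have := a.2
        omega
      have hpl : p ≤ ℓ - 1 := hsl1
      have key_inj : ∀ i j (a b : Fin p), A i a = A j b → i = j ∧ a = b := by
        intro i j a b heq
        have ha := hlev a
        have hb := hlev b
        have hlv := hylevel (e i) (heI1 i) (e j) (heI1 j) (p - a) (p - b)
          (by omega) (by omega) heq
        have hab : (a:ℕ) = (b:ℕ) := by
          have := a.2; have := b.2; omega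
        have habf : a = b := Fin.ext hab
        refine ⟨?_, habf⟩
        subst habf
        by_contra hij
        have hne : e i ≠ e j := fun h => hij (heinj h)
        set q := p - (a:ℕ) with hq
        have heq' : y (e i) q = y (e j) q := heq
        rcases Nat.lt_or_ge q (s+1) with hqs | hqs
        · -- q ≤ s : use walk adjacency + Q2  (q+1 ≤ s case) or Q1 (q = s)
          rcases Nat.lt_or_ge q s with hqs' | hqs'
          · -- q + 1 ≤ s
            have hadj := hyadj (e i) (heI1 i) q (by omega)
            rw [heq'] at hadj
            exact hQ2 (e i) (heI i) (e j) (heI j) hne (q+1) q (by omega) (by omega)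
              hadj.symm
          · have hqss : q = s := by omega
            rw [hqss] at heq'
            exact hQ1 (e i) (heI i) (e j) (heI j) hne heq'
        · have hqss : q = s + 1 := by omega
          rw [hqss] at heq'
          exact hI2inj (e i) (heI2 i) (e j) (heI2 j) hne heq'
      have hke := ktilde_embed (G := G) (n := n) (p := p) (by omega) A U W
        key_inj
        (fun i j h => heinj h)
        (fun i j h => heinj (hwinj (e i) (heI1 i) (e j) (heI1 j) h))
        (by -- hUA
          intro i j a
          have ha := hlev a
          intro heq
          have heq' : e i = y (e j) (p - (a:ℕ)) := heq
          have h1 := hDy0 (e i) (heI1 i)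
          have h2 := hyD (e j) (heI1 j) (p - a) (by omega)
          rw [← heq'] at h2
          omega)
        (by -- hWA
          intro i j a
          have ha := hlev a
          intro heq
          have heq' : w (e i) = y (e j) (p - (a:ℕ)) := heq
          have h1 := hwD (e i) (heI1 i)
          have h2 := hyD (e j) (heI1 j) (p - a) (by omega)
          rw [← heq'] at h2
          omega)
        (by -- hUW
          intro i j
          exact hwne (e i) (heI1 i) (e j) (heI1 j))
        (by -- hpath
          intro i a b hab
          have ha := hlev a
          have hb := hlev b
          have hlt : p - (b:ℕ) < ℓ := by omega
          have hadj := hyadj (e i) (heI1 i) (p - b) hlt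
          have : p - (b:ℕ) + 1 = p - (a:ℕ) := by omega
          rw [this] at hadj
          exact hadj.symm
        )
        (by -- hnopath
          intro i a b h1 h2 hadj
          have ha := hlev a
          have hb := hlev b
          have hadj' : G.Adj (y (e i) (p - (a:ℕ))) (y (e i) (p - (b:ℕ))) := hadj
          by_cases hab : (a:ℕ) = (b:ℕ)
          · rw [show p - (a:ℕ) = p - (b:ℕ) by omega] at hadj'
            exact G.irrefl hadj'
          · rcases Nat.lt_or_ge (a:ℕ) (b:ℕ) with hlt | hge
            · -- a < b, so level of a > level of b, gap ≥ 2
              exact hy_gap (e i) (heI1 i) (e i) (heI1 i) (p - b) (p - a)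
                (by omega) (by omega) hadj'.symm
            · exact hy_gap (e i) (heI1 i) (e i) (heI1 i) (p - a) (p - b)
                (by omega) (by omega) hadj')
        (by -- hcliq
          intro i j a b hij ha hb
          have hea : p - (a:ℕ) = s+1 := by omega
          have heb : p - (b:ℕ) = s+1 := by omega
          show G.Adj (y (e i) (p - (a:ℕ))) (y (e j) (p - (b:ℕ)))
          rw [hea, heb]
          exact hTcliq (e i) (hemem i) (e j) (hemem j) (fun h => hij (heinj h)))
        (by -- hcross
          intro i j a b hij hz hadj
          have ha := hlev a
          have hb := hlev b
          have hne : e i ≠ e j := fun h => hij (heinj h)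
          set qa := p - (a:ℕ) with hqa
          set qb := p - (b:ℕ) with hqb
          have hadj' : G.Adj (y (e i) qa) (y (e j) qb) := hadj
          rcases Nat.lt_or_ge qa (s+1) with h1 | h1 <;> rcases Nat.lt_or_ge qb (s+1) with h2 | h2
          · exact hQ2 (e i) (heI i) (e j) (heI j) hne qa qb (by omega) (by omega) hadj'
          · -- qb = s+1, qa ≤ s
            have hqb1 : qb = s + 1 := by omega
            rcases Nat.lt_or_ge qa s with h3 | h3
            · -- gap ≥ 2
              exact hy_gap (e i) (heI1 i) (e j) (heI1 j) qa qb (by omega) (by omega) hadj'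
            · -- qa = s : pruned in step (2)
              have hqa1 : qa = s := by omega
              have hpr := (hI3ind (e j) (heI3 j) (e i) (heI3 i) (Ne.symm hne)).1
              rw [hqa1, hqb1] at hadj'
              exact hpr hadj'.symm
          · have hqa1 : qa = s + 1 := by omega
            rcases Nat.lt_or_ge qb s with h3 | h3
            · exact hy_gap (e j) (heI1 j) (e i) (heI1 i) qb qa (by omega) (by omega) hadj'.symm
            · have hqb1 : qb = s := by omega
              have hpr := (hI3ind (e i) (heI3 i) (e j) (heI3 j) hne).1
              rw [hqa1, hqb1] at hadj'
              exact hpr hadj'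
          · -- both s+1 : a = b = 0, excluded
            exact hz ⟨by omega, by omega⟩)
        (by -- hUadj
          intro i a ha
          have hpa : p - (a:ℕ) = 1 := by
            have := hlev a
            omega
          show G.Adj (y (e i) (p - (a:ℕ))) (e i)
          rw [hpa]
          have h1 := hyadj (e i) (heI1 i) 0 (by omega)
          rw [hy0 (e i) (heI1 i)] at h1
          have h2 : (0:ℕ) + 1 = 1 := rfl
          rw [h2] at h1
          exact h1.symm)
        (by -- hWadj
          intro i a ha
          have hpa : p - (a:ℕ) = 1 := by
            have := hlev a
            omega
          show G.Adj (y (e i) (p - (a:ℕ))) (w (e i))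
          rw [hpa]
          have hww2 := hwadj (e i) (heI1 i)
          rw [hc (e i) (heI1 i)] at hww2
          exact hww2)
        (by -- hUn
          intro i j a hcond hadj
          have ha := hlev a
          have hadj' : G.Adj (e i) (y (e j) (p - (a:ℕ))) := hadj
          rcases Nat.lt_or_ge (p - (a:ℕ)) 2 with h1 | h1
          · -- level = 1, so a = p-1; then i ≠ j
            have hq1 : p - (a:ℕ) = 1 := by omega
            have hij : i ≠ j := by
              rcases hcond with h | h
              · exact h
              · exfalso; apply h; omega
            have hne : e i ≠ e j := fun h => hij (heinj h)
            have hq2 := hQ2 (e i) (heI i) (e j) (heI j) hne 0 1 (by omega) (by omega)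
            rw [hy0 (e i) (heI1 i)] at hq2
            rw [hq1] at hadj'
            exact hq2 hadj'
          · -- level ≥ 2: distance gap
            exact hDu_gap (e i) (heI1 i) (e j) (heI1 j) (p - (a:ℕ)) h1 (by omega) hadj')
        (by -- hWn
          intro i j a hcond hadj
          have ha := hlev a
          have hadj' : G.Adj (w (e i)) (y (e j) (p - (a:ℕ))) := hadj
          rcases Nat.lt_or_ge (p - (a:ℕ)) 2 with h1 | h1
          · have hq1 : p - (a:ℕ) = 1 := by omega
            have hij : i ≠ j := by
              rcases hcond with h | h
              · exact h
              · exfalso; apply h; omega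
            have hne : e i ≠ e j := fun h => hij (heinj h)
            have hp1 := hP1b (e i) (heI1 i) (e j) (heI1 j) hne
            rw [hc (e j) (heI1 j)] at hp1
            rw [hq1] at hadj'
            exact hp1 hadj'
          · exact hDw_gap (e i) (heI1 i) (e j) (heI1 j) (p - (a:ℕ)) h1 (by omega) hadj')
        (by -- hUU
          intro i j hij
          exact huexp (e i) (heI1 i) (e j) (heI1 j) (fun h => hij (heinj h)))
        (by -- hWW
          intro i j hij
          exact hX3 (e i) (heI1 i) (e j) (heI1 j) (fun h => hij (heinj h)))
        (by -- hUWn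
          intro i j
          by_cases hij : i = j
          · subst hij
            exact hnuw (e i) (heI1 i)
          · exact hX2 (e i) (heI1 i) (e j) (heI1 j) (fun h => hij (heinj h)))
      exact hkt p (by omega) hke
    · -- INDEPENDENT case: recurse
      refine ih (s+1) T (fun x hx => hI (hI2sub (hI3sub (hTsub hx)))) (by omega) (by omega)
        ?_ ?_ (le_of_eq hTcard.symm)
      · intro u hu u' hu' hne
        exact hI2inj u (hI3sub (hTsub hu)) u' (hI3sub (hTsub hu')) hne
      · intro u hu u' hu' hne a b hastep hbstep hadj
        have huI : u ∈ I := hI2sub (hI3sub (hTsub hu))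
        have huI' : u' ∈ I := hI2sub (hI3sub (hTsub hu'))
        have huI1 : u ∈ I1 := hI huI
        have huI1' : u' ∈ I1 := hI huI'
        rcases Nat.lt_or_ge a (s+1) with h1 | h1 <;> rcases Nat.lt_or_ge b (s+1) with h2 | h2
        · exact hQ2 u huI u' huI' hne a b (by omega) (by omega) hadj
        · have hb1 : b = s + 1 := by omega
          rcases Nat.lt_or_ge a s with h3 | h3
          · exact hy_gap u huI1 u' huI1' a b (by omega) (by omega) hadj
          · have ha1 : a = s := by omega
            have hpr := (hI3ind u' (hTsub hu') u (hTsub hu) (Ne.symm hne)).1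
            rw [ha1, hb1] at hadj
            exact hpr hadj.symm
        · have ha1 : a = s + 1 := by omega
          rcases Nat.lt_or_ge b s with h3 | h3
          · exact hy_gap u' huI1' u huI1 b a (by omega) (by omega) hadj.symm
          · have hb1 : b = s := by omega
            have hpr := (hI3ind u (hTsub hu) u' (hTsub hu') hne).1
            rw [ha1, hb1] at hadj
            exact hpr hadj
        · have ha1 : a = s + 1 := by omega
          have hb1 : b = s + 1 := by omega
          rw [ha1, hb1] at hadj
          exact hTind u hu u' hu' hne hadj

end MainInduction


section MainTheorem

theorem main_bound {V : Type} [Fintype V] (G : SimpleGraph V) {n N : ℕ}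
    (hn : 3 < n) (hN : 3 < N) (hconn : G.Connected)
    (hdiam : ∀ x y : V, G.dist x y ≤ N)
    (hstar : ¬ Nonempty (_root_.starGraph n ↪g G))
    (hkt : ∀ p : ℕ, 1 ≤ p → ¬ Nonempty (Ktilde n p ↪g G)) :
    deficiency G ≤ fval n N := by
  classical
  by_contra hcon
  push_neg at hcon
  -- maximum matching (as involution)
  haveI hdecM : DecidablePred (IsMch G) := Classical.decPred _
  set cand := Finset.univ.filter (fun g : V → V => IsMch G g) with hcand
  have hcne : cand.Nonempty := ⟨(fun v => v), by
    rw [hcand, Finset.mem_filter]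
    exact ⟨Finset.mem_univ _, isMch_id⟩⟩
  obtain ⟨f₀, hf₀mem, hf₀max⟩ := Finset.exists_max_image cand msize hcne
  have hf₀ : IsMch G f₀ := (Finset.mem_filter.mp hf₀mem).2
  have hmax0 : ∀ g, IsMch G g → msize g ≤ msize f₀ := fun g hg =>
    hf₀max g (Finset.mem_filter.mpr ⟨Finset.mem_univ _, hg⟩)
  have hsplit : ∀ h : V → V, (exposedF h).card + msize h = Fintype.card V := by
    intro h
    rw [msize, exposedF, covered]
    rw [Finset.card_filter_add_card_filter_not (s := Finset.univ)
      (p := fun v => h v = v)]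
    · exact Finset.card_univ
  have hdef : deficiency G ≤ (exposedF f₀).card := by
    obtain ⟨M, hM, hMc⟩ := bridge f₀ hf₀
    have hmem : msize f₀ ∈ {k : ℕ | ∃ M : G.Subgraph, M.IsMatching ∧ M.verts.ncard = k} :=
      ⟨M, hM, hMc⟩
    have hbdd : BddAbove {k : ℕ | ∃ M : G.Subgraph, M.IsMatching ∧ M.verts.ncard = k} := by
      refine ⟨Fintype.card V, ?_⟩
      rintro k ⟨M', hM', rfl⟩
      calc M'.verts.ncard ≤ (Set.univ : Set V).ncard :=
            Set.ncard_le_ncard (Set.subset_univ _) Set.finite_univ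
        _ = Fintype.card V := by rw [Set.ncard_univ, Nat.card_eq_fintype_card]
    have h1 : msize f₀ ≤ sSup {k : ℕ | ∃ M : G.Subgraph, M.IsMatching ∧ M.verts.ncard = k} :=
      le_csSup hbdd hmem
    have h2 := hsplit f₀
    rw [deficiency]
    omega
  have hbig : fval n N < (exposedF f₀).card := lt_of_lt_of_le hcon hdef
  have hexpne : (exposedF f₀).Nonempty := Finset.card_pos.mp (by omega)
  obtain ⟨ustar, hustar0⟩ := hexpne
  -- Phi-minimal matching among maximum matchings exposing ustar
  haveI : DecidablePred (fun g : V → V => msize g = msize f₀ ∧ g ustar = ustar) :=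
    Classical.decPred _
  set T0 := cand.filter (fun g => msize g = msize f₀ ∧ g ustar = ustar) with hT0
  have hT0ne : T0.Nonempty := ⟨f₀, by
    rw [hT0, Finset.mem_filter]
    exact ⟨hf₀mem, rfl, mem_exposedF.mp hustar0⟩⟩
  obtain ⟨f, hfT, hfmin'⟩ := Finset.exists_min_image T0 (Phi G ustar) hT0ne
  rw [hT0, Finset.mem_filter] at hfT
  have hf : IsMch G f := (Finset.mem_filter.mp hfT.1).2
  have hfsz : msize f = msize f₀ := hfT.2.1
  have hustar : f ustar = ustar := hfT.2.2
  have hmax : ∀ g, IsMch G g → msize g ≤ msize f := fun g hg => by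
    rw [hfsz]; exact hmax0 g hg
  have hmin : ∀ g, IsMch G g → msize g = msize f → g ustar = ustar →
      Phi G ustar f ≤ Phi G ustar g := by
    intro g hg h1 h2
    exact hfmin' g (by
      rw [hT0, Finset.mem_filter]
      exact ⟨Finset.mem_filter.mpr ⟨Finset.mem_univ _, hg⟩, h1.trans hfsz, h2⟩)
  have hcardex : fval n N < (exposedF f).card := by
    have e1 := hsplit f
    have e2 := hsplit f₀
    omega
  -- shortest walks to ustar
  have hex : ∀ u : V, ∃ pw : G.Walk u ustar, pw.length = G.dist u ustar :=
    fun u => hconn.exists_walk_length_eq_dist u ustar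
  choose pth hpth using hex
  set y : V → ℕ → V := fun u a => (pth u).getVert a with hy
  set c : V → V := fun u => y u 1 with hcdef
  set w : V → V := fun u => f (c u) with hwdef
  have hE : ∀ u u' : V, f u = u → f u' = u' → u ≠ u' → ¬ G.Adj u u' := by
    intro u u' h1 h2 h3 hadj
    exact aug2 hf hmax h1 h2 hadj
  -- pigeonhole on distance
  set U2 := (exposedF f).erase ustar with hU2
  have hU2card : fval n N ≤ U2.card := by
    rw [hU2, Finset.card_erase_of_mem (mem_exposedF.mpr hustar)]
    omega
  have hmapsto : ∀ u ∈ U2, G.dist ustar u ∈ Finset.Icc 2 N := by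
    intro u hu
    have hune : u ≠ ustar := Finset.ne_of_mem_erase hu
    have huexp : f u = u := mem_exposedF.mp (Finset.mem_of_mem_erase hu)
    rw [Finset.mem_Icc]
    refine ⟨?_, hdiam ustar u⟩
    have h0 : G.dist ustar u ≠ 0 := by
      intro hh
      rw [hconn.dist_eq_zero_iff] at hh
      exact hune hh.symm
    have h1 : G.dist ustar u ≠ 1 := by
      intro hh
      have hl : (pth u).length = 1 := by
        rw [hpth u, SimpleGraph.dist_comm]; exact hh
      have hadj := (pth u).adj_getVert_succ (by rw [hl]; omega : 0 < (pth u).length)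
      rw [SimpleGraph.Walk.getVert_zero] at hadj
      have hv1 : (pth u).getVert (0+1) = ustar := by
        rw [show 0+1 = (pth u).length from hl.symm]
        exact (pth u).getVert_length
      rw [hv1] at hadj
      exact hE u ustar huexp hustar hune hadj
    omega
  have hpig : (Finset.Icc 2 N).card *
      ((n+1) * ((4*n+1) * (ramN n (req n N) + 1) + 1) + 1) ≤ U2.card := by
    have h1 : (Finset.Icc 2 N).card = N - 1 := by rw [Nat.card_Icc]; omega
    rw [h1]
    have h2 : (N-1) * ((n+1) * ((4*n+1) * (ramN n (req n N) + 1) + 1) + 1)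
        ≤ (N+1) * ((n+1) * ((4*n+1) * (ramN n (req n N) + 1) + 1) + 1) := by
      apply Nat.mul_le_mul_right
      omega
    have h3 : (N+1) * ((n+1) * ((4*n+1) * (ramN n (req n N) + 1) + 1) + 1) ≤ fval n N := by
      rw [fval]; omega
    omega
  obtain ⟨ℓ, hlmem, hlfib⟩ :=
    Finset.exists_le_card_fiber_of_mul_le_card_of_maps_to hmapsto
      ⟨2, by rw [Finset.mem_Icc]; omega⟩ hpig
  rw [Finset.mem_Icc] at hlmem
  obtain ⟨hl2, hlN⟩ := hlmem
  set U1 := U2.filter (fun u => G.dist ustar u = ℓ) with hU1def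
  have hU1card : (n+1) * ((4*n+1) * (ramN n (req n N) + 1) + 1) + 1 ≤ U1.card := hlfib
  -- per-element facts
  have hU1exp : ∀ u ∈ U1, f u = u := fun u hu =>
    mem_exposedF.mp (Finset.mem_of_mem_erase (Finset.mem_of_mem_filter u hu))
  have hU1ne : ∀ u ∈ U1, u ≠ ustar := fun u hu =>
    Finset.ne_of_mem_erase (Finset.mem_of_mem_filter u hu)
  have hU1dist : ∀ u ∈ U1, G.dist ustar u = ℓ := fun u hu =>
    (Finset.mem_filter.mp hu).2
  have hlen : ∀ u ∈ U1, (pth u).length = ℓ := by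
    intro u hu
    rw [hpth u, SimpleGraph.dist_comm]
    exact hU1dist u hu
  have hyD : ∀ u ∈ U1, ∀ a, a ≤ ℓ → G.dist ustar (y u a) = ℓ - a := by
    intro u hu a ha
    have h := dist_getVert_eq hconn (pth u) (hpth u)
      (by rw [hlen u hu]; exact ha : a ≤ (pth u).length)
    rw [SimpleGraph.dist_comm (u := u), hU1dist u hu] at h
    exact h
  have hyadj : ∀ u ∈ U1, ∀ a, a < ℓ → G.Adj (y u a) (y u (a+1)) := by
    intro u hu a ha
    exact (pth u).adj_getVert_succ (by rw [hlen u hu]; exact ha)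
  have hylast : ∀ u ∈ U1, y u ℓ = ustar := by
    intro u hu
    show (pth u).getVert ℓ = ustar
    rw [show ℓ = (pth u).length from (hlen u hu).symm]
    exact (pth u).getVert_length
  have hy0 : ∀ u ∈ U1, y u 0 = u := by
    intro u hu
    exact (pth u).getVert_zero
  -- branch facts
  have hadj_uc : ∀ u ∈ U1, G.Adj u (c u) := by
    intro u hu
    have h := hyadj u hu 0 (by omega)
    rw [hy0 u hu] at h
    exact h
  have hDc : ∀ u ∈ U1, G.dist ustar (c u) = ℓ - 1 := fun u hu => hyD u hu 1 (by omega)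
  have hcm : ∀ u ∈ U1, f (c u) ≠ c u := by
    intro u hu heq
    exact hE u (c u) (hU1exp u hu) heq (hadj_uc u hu).ne (hadj_uc u hu)
  have hwadj : ∀ u ∈ U1, G.Adj (c u) (w u) := fun u hu => hf.2 (c u) (hcm u hu)
  have hwD : ∀ u ∈ U1, ℓ ≤ G.dist ustar (w u) := by
    intro u hu
    have h := swap_general hf hmin u (c u) (w u) (hU1exp u hu) rfl
      (Ne.symm (hcm u hu)) (hadj_uc u hu) hustar (Ne.symm (hU1ne u hu))
    rw [hU1dist u hu] at h
    exact h
  have hnuw : ∀ u ∈ U1, ¬ G.Adj u (w u) := by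
    intro u hu hadj
    have hfw : f (w u) = c u := hf.1 (c u)
    have h := swap_general hf hmin u (w u) (c u) (hU1exp u hu) hfw
      (hcm u hu) hadj hustar (Ne.symm (hU1ne u hu))
    rw [hU1dist u hu, hDc u hu] at h
    omega
  have hwne : ∀ u ∈ U1, ∀ u' ∈ U1, u ≠ w u' := by
    intro u hu u' hu' heq
    have hfw : f (w u') = c u' := hf.1 (c u')
    rw [← heq, hU1exp u hu] at hfw
    exact hcm u' hu' (by rw [← hfw]; exact hU1exp u hu)
  have hX2 : ∀ u ∈ U1, ∀ u' ∈ U1, u ≠ u' → ¬ G.Adj u (w u') := by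
    intro u hu u' hu' hne hadj
    exact aug3 hf hmax (hU1exp u hu) (hU1exp u' hu') hne rfl
      (Ne.symm (hcm u' hu')) hadj (hadj_uc u' hu').symm
  have hX3' : ∀ u ∈ U1, ∀ u' ∈ U1, c u ≠ c u' → ¬ G.Adj (w u) (w u') := by
    intro u hu u' hu' hcc hadj
    have huu' : u ≠ u' := fun h => hcc (by rw [h])
    have hcw' : c u ≠ w u' := by
      intro heq
      have h1 := hDc u hu
      have h2 := hwD u' hu'
      rw [← heq] at h2
      omega
    exact aug5 hf hmax (hU1exp u hu) (hU1exp u' hu') huu' rfl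
      (Ne.symm (hcm u hu)) rfl (Ne.symm (hcm u' hu')) hcc hcw'
      (hadj_uc u hu) hadj (hadj_uc u' hu').symm
  -- init prune (a): distinct fork centers
  have hcfib : ∀ v ∈ U1, (U1.filter (fun x => c x = c v)).card ≤ n - 1 := by
    intro v hv
    apply star_bound hstar (c v)
    · intro x hx
      rw [Finset.mem_filter] at hx
      have := hadj_uc x hx.1
      rw [hx.2] at this
      exact this.symm
    · intro x hx x' hx' hxx'
      rw [Finset.mem_filter] at hx hx'
      exact hE x x' (hU1exp x hx.1) (hU1exp x' hx'.1) hxx'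
  obtain ⟨I0, hI0sub, hI0cinj, hI0card⟩ := fiber_prune c (n-1) U1.card U1 le_rfl hcfib
  have hI0U1 : ∀ u ∈ I0, u ∈ U1 := fun u hu => hI0sub hu
  -- init prune (b): cross edges to fork centers
  set Rb : V → V → Prop := fun x x' => G.Adj x' (c x) ∨ G.Adj (w x') (c x) with hRb
  haveI : DecidableRel Rb := fun _ _ => Classical.dec _
  have hRbout : ∀ v ∈ I0, (I0.filter (Rb v)).card ≤ 2*(n-1) := by
    intro v hv
    have hsub : I0.filter (Rb v) ⊆
        I0.filter (fun x' => G.Adj x' (c v)) ∪ I0.filter (fun x' => G.Adj (w x') (c v)) := by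
      intro x hx
      rw [Finset.mem_filter] at hx
      rcases hx.2 with h | h
      · exact Finset.mem_union_left _ (Finset.mem_filter.mpr ⟨hx.1, h⟩)
      · exact Finset.mem_union_right _ (Finset.mem_filter.mpr ⟨hx.1, h⟩)
    have h1 : (I0.filter (fun x' => G.Adj x' (c v))).card ≤ n - 1 := by
      apply star_bound hstar (c v)
      · intro x hx
        exact (Finset.mem_filter.mp hx).2.symm
      · intro x hx x' hx' hxx'
        rw [Finset.mem_filter] at hx hx'
        exact hE x x' (hU1exp x (hI0U1 x hx.1)) (hU1exp x' (hI0U1 x' hx'.1)) hxx'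
    have h2 : (I0.filter (fun x' => G.Adj (w x') (c v))).card ≤ n - 1 := by
      set fib := I0.filter (fun x' => G.Adj (w x') (c v)) with hfib
      set img := fib.image w with himg
      have himgc : img.card = fib.card := by
        rw [himg]
        apply Finset.card_image_of_injOn
        intro a ha b hb heq
        have haI0 : a ∈ I0 := Finset.mem_of_mem_filter a ha
        have hbI0 : b ∈ I0 := Finset.mem_of_mem_filter b hb
        have hcc : c a = c b := by
          have h1 : f (w a) = c a := hf.1 (c a)
          have h2 : f (w b) = c b := hf.1 (c b)
          rw [← h1, ← h2, heq]
        by_contra hab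
        exact hI0cinj a haI0 b hbI0 hab hcc
      have : img.card ≤ n - 1 := by
        apply star_bound hstar (c v)
        · intro x hx
          rw [himg, Finset.mem_image] at hx
          obtain ⟨u, hu, rfl⟩ := hx
          exact (Finset.mem_filter.mp hu).2.symm
        · intro x hx x' hx' hxx'
          rw [himg, Finset.mem_image] at hx hx'
          obtain ⟨u, hu, rfl⟩ := hx
          obtain ⟨u', hu', rfl⟩ := hx'
          have huI0 : u ∈ I0 := Finset.mem_of_mem_filter u hu
          have huI0' : u' ∈ I0 := Finset.mem_of_mem_filter u' hu'
          have hne : u ≠ u' := fun h => hxx' (by rw [h])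
          have hccne : c u ≠ c u' := hI0cinj u huI0 u' huI0' hne
          exact hX3' u (hI0U1 u huI0) u' (hI0U1 u' huI0') hccne
      omega
    calc (I0.filter (Rb v)).card
        ≤ (I0.filter (fun x' => G.Adj x' (c v)) ∪
            I0.filter (fun x' => G.Adj (w x') (c v))).card := Finset.card_le_card hsub
      _ ≤ _ + _ := Finset.card_union_le _ _
      _ ≤ 2*(n-1) := by omega
  obtain ⟨I1, hI1sub, hI1ind, hI1card⟩ := prune Rb (2*(n-1)) I0 hRbout
  have hI1U1 : ∀ u ∈ I1, u ∈ U1 := fun u hu => hI0U1 u (hI1sub hu)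
  have hP1a : ∀ u ∈ I1, ∀ u' ∈ I1, u ≠ u' → ¬ G.Adj u (c u') := by
    intro u hu u' hu' hne hadj
    exact (hI1ind u' hu' u hu (Ne.symm hne)).1 (Or.inl hadj)
  have hP1b : ∀ u ∈ I1, ∀ u' ∈ I1, u ≠ u' → ¬ G.Adj (w u) (c u') := by
    intro u hu u' hu' hne hadj
    exact (hI1ind u' hu' u hu (Ne.symm hne)).1 (Or.inr hadj)
  have hcinj : ∀ u ∈ I1, ∀ u' ∈ I1, c u = c u' → u = u' := by
    intro u hu u' hu' h
    by_contra hne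
    exact hI0cinj u (hI1sub hu) u' (hI1sub hu') hne h
  have hwinj : ∀ u ∈ I1, ∀ u' ∈ I1, w u = w u' → u = u' := by
    intro u hu u' hu' heq
    apply hcinj u hu u' hu'
    have h1 : f (w u) = c u := hf.1 (c u)
    have h2 : f (w u') = c u' := hf.1 (c u')
    rw [← h1, ← h2, heq]
  have hX3 : ∀ u ∈ I1, ∀ u' ∈ I1, u ≠ u' → ¬ G.Adj (w u) (w u') := by
    intro u hu u' hu' hne
    exact hX3' u (hI1U1 u hu) u' (hI1U1 u' hu')
      (hI0cinj u (hI1sub hu) u' (hI1sub hu') hne)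
  -- arithmetic: I1 is big enough for the initial Ramsey
  have hI1big : ramN n (req n (ℓ - 2)) ≤ I1.card := by
    set R := ramN n (req n N) with hR
    have e0 : (n+1) * ((4*n+1) * (R + 1) + 1) + 1 ≤ U1.card := hU1card
    have e1 : (4*n+1) * (R + 1) + 1 ≤ I0.card := by
      by_contra hcontr
      push_neg at hcontr
      have h3 : (n-1) * I0.card ≤ (n-1) * ((4*n+1) * (R+1)) := by
        apply Nat.mul_le_mul_left
        omega
      have h4 : (n-1) * ((4*n+1) * (R+1)) ≤ (n+1) * ((4*n+1) * (R+1)) := by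
        apply Nat.mul_le_mul_right
        omega
      have h5 : (n+1) * ((4*n+1) * (R+1) + 1) = (n+1) * ((4*n+1) * (R+1)) + (n+1) := by ring
      omega
    have e2 : R + 1 ≤ I1.card := by
      by_contra hcontr
      push_neg at hcontr
      have h3 : (2*(2*(n-1))+1) * I1.card ≤ (2*(2*(n-1))+1) * R := by
        apply Nat.mul_le_mul_left
        omega
      have h4 : (2*(2*(n-1))+1) * R ≤ (4*n+1) * R := by
        apply Nat.mul_le_mul_right
        omega
      have h5 : (4*n+1) * (R+1) = (4*n+1) * R + (4*n+1) := by ring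
      omega
    have e3 : ramN n (req n (ℓ-2)) ≤ R := by
      rw [hR]
      exact ramN_mono (req_mono n (by omega) (by omega))
    omega
  -- initial Ramsey on fork centers
  rcases my_ramsey (fun u u' => G.Adj (c u) (c u')) (fun x y h => h.symm)
      n (req n (ℓ-2)) I1 hI1big with
    ⟨T, hTsub, hTcard, hTcliq⟩ | ⟨T, hTsub, hTcard, hTind⟩
  · -- CLIQUE case: K̃ₙ¹
    obtain ⟨e, heinj, hemem⟩ := enum_finset T hTcard
    have heI1 : ∀ i, e i ∈ I1 := fun i => hTsub (hemem i)
    have heU1 : ∀ i, e i ∈ U1 := fun i => hI1U1 _ (heI1 i)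
    have hke := ktilde_embed (G := G) (n := n) (p := 1) le_rfl
      (fun i _ => c (e i)) (fun i => e i) (fun i => w (e i))
      (by -- hAinj
        intro i j a b heq
        have heq' : c (e i) = c (e j) := heq
        refine ⟨heinj (hcinj _ (heI1 i) _ (heI1 j) heq'), Fin.ext ?_⟩
        have := a.2; have := b.2; omega)
      (fun i j h => heinj h)
      (fun i j h => heinj (hwinj _ (heI1 i) _ (heI1 j) h))
      (by -- hUA
        intro i j a heq
        have heq' : e i = c (e j) := heq
        have h1 := hU1dist _ (heU1 i)
        have h2 := hDc _ (heU1 j)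
        rw [← heq'] at h2
        omega)
      (by -- hWA
        intro i j a heq
        have heq' : w (e i) = c (e j) := heq
        have h1 := hwD _ (heU1 i)
        have h2 := hDc _ (heU1 j)
        rw [← heq'] at h2
        omega)
      (fun i j => hwne _ (heU1 i) _ (heU1 j))
      (by -- hpath: impossible in Fin 1
        intro i a b hab
        exfalso
        have := a.2; have := b.2; omega)
      (by -- hnopath: same vertex
        intro i a b h1 h2 hadj
        exact G.irrefl hadj)
      (by -- hcliq
        intro i j a b hij ha hb
        exact hTcliq _ (hemem i) _ (hemem j) (fun h => hij (heinj h)))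
      (by -- hcross: vacuous
        intro i j a b hij hz
        exfalso
        apply hz
        have := a.2; have := b.2
        omega)
      (by -- hUadj
        intro i a ha
        exact (hadj_uc _ (heU1 i)).symm)
      (by -- hWadj
        intro i a ha
        exact hwadj _ (heU1 i))
      (by -- hUn
        intro i j a hcond hadj
        have hij : i ≠ j := by
          rcases hcond with h | h
          · exact h
          · exfalso; apply h; have := a.2; omega
        exact hP1a _ (heI1 i) _ (heI1 j) (fun h => hij (heinj h)) hadj)
      (by -- hWn
        intro i j a hcond hadj
        have hij : i ≠ j := by
          rcases hcond with h | h
          · exact h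
          · exfalso; apply h; have := a.2; omega
        exact hP1b _ (heI1 i) _ (heI1 j) (fun h => hij (heinj h)) hadj)
      (by -- hUU
        intro i j hij
        exact hE _ _ (hU1exp _ (heU1 i)) (hU1exp _ (heU1 j)) (fun h => hij (heinj h)))
      (by -- hWW
        intro i j hij
        exact hX3 _ (heI1 i) _ (heI1 j) (fun h => hij (heinj h)))
      (by -- hUWn
        intro i j
        by_cases hij : i = j
        · subst hij; exact hnuw _ (heU1 i)
        · exact hX2 _ (heU1 i) _ (heU1 j) (fun h => hij (heinj h)))
    exact hkt 1 le_rfl hke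
  · -- INDEPENDENT case: run the level induction
    refine level_induction hn hstar hkt hconn ustar ℓ hl2 y c w I1
      (fun u hu => hyD u (hI1U1 u hu))
      (fun u hu => hyadj u (hI1U1 u hu))
      (fun u hu => hylast u (hI1U1 u hu))
      (fun u hu => hy0 u (hI1U1 u hu))
      (fun u hu => rfl)
      (fun u hu => hwD u (hI1U1 u hu))
      (fun u hu => hwadj u (hI1U1 u hu))
      hwinj
      (fun u hu u' hu' => hwne u (hI1U1 u hu) u' (hI1U1 u' hu'))
      (fun u hu => hnuw u (hI1U1 u hu))
      (fun u hu u' hu' hne => hE u u' (hU1exp u (hI1U1 u hu)) (hU1exp u' (hI1U1 u' hu')) hne)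
      (fun u hu u' hu' hne => hX2 u (hI1U1 u hu) u' (hI1U1 u' hu') hne)
      hX3 hP1b
      (ℓ - 2) 1 T hTsub (by omega) (by omega)
      ?_ ?_ (le_of_eq hTcard.symm)
    · -- Q1 : fork centers distinct
      intro u hu u' hu' hne
      exact hI0cinj u (hI1sub (hTsub hu)) u' (hI1sub (hTsub hu')) hne
    · -- Q2 : levels 0,1 pairwise nonadjacent
      intro u hu u' hu' hne a b ha hb hadj
      have huI1 : u ∈ I1 := hTsub hu
      have huI1' : u' ∈ I1 := hTsub hu'
      interval_cases a <;> interval_cases b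
      · rw [hy0 u (hI1U1 u huI1), hy0 u' (hI1U1 u' huI1')] at hadj
        exact hE u u' (hU1exp u (hI1U1 u huI1)) (hU1exp u' (hI1U1 u' huI1')) hne hadj
      · rw [hy0 u (hI1U1 u huI1)] at hadj
        exact hP1a u huI1 u' huI1' hne hadj
      · rw [hy0 u' (hI1U1 u' huI1')] at hadj
        exact hP1a u' huI1' u huI1 (Ne.symm hne) hadj.symm
      · exact hTind u hu u' hu' hne hadj

end MainTheorem


/-- There is a function `f(n, N)` such that for all integers `n > 3` and `N > 3`, every
connected graph `G` of diameter at most `N` containing no induced `K_{1,n}` and no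
induced `K̃ₙᵖ` for any `p ≥ 1` satisfies `def(G) ≤ f(n, N)`. -/
theorem deficiency_bounded_of_bounded_diam :
    ∃ f : ℕ → ℕ → ℕ, ∀ (n N : ℕ), 3 < n → 3 < N →
      ∀ (V : Type) [Fintype V] (G : SimpleGraph V), G.Connected →
        (∀ x y : V, G.dist x y ≤ N) →
        ¬ Nonempty (_root_.starGraph n ↪g G) →
        (∀ p : ℕ, 1 ≤ p → ¬ Nonempty (Ktilde n p ↪g G)) →
        deficiency G ≤ f n N := by
  exact ⟨fval, fun n N hn hN V _ G hconn hdiam hstar hkt =>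
    main_bound G hn hN hconn hdiam hstar hkt⟩
end
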